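/- arXiv:2112.02527 — 5 statements merged into one kernel-verified Lean document; each statement's English description precedes it below -/
import Mathlib

section
/- For a connected graph G of order n ≥ 2 with diameter 2, the distance Laplacian eigenvalues satisfy ρ^L_i(G) = 2n − μ_{n−i}(G) for i = 1, 2, ..., n−1, where μ_1 ≥ μ_2 ≥ ... ≥ μ_n = 0 are the Laplacian eigenvalues of G. -/
open Finset Matrix BigOperators

variable {V : Type*} [Fintype V] [DecidableEq V]

/-- The transmission of a vertex: the sum of distances to all other vertices. -/
noncomputable def transmission (G : SimpleGraph V) (v : V) : ℕ := ∑ u, G.dist v u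

/-- The distance matrix of a graph. -/
noncomputable def distMatrix (G : SimpleGraph V) : Matrix V V ℝ :=
  fun u v => (G.dist u v : ℝ)

/-- The distance Laplacian matrix `Tr(G) - D(G)`. -/
noncomputable def distLap (G : SimpleGraph V) : Matrix V V ℝ :=
  Matrix.diagonal (fun v => (transmission G v : ℝ)) - distMatrix G

/-- The Wiener index of a graph. -/
noncomputable def wiener (G : SimpleGraph V) : ℝ := (∑ v, (transmission G v : ℝ)) / 2

/-- `ρ` lists the eigenvalues of the (Hermitian) matrix `M` in nonincreasing order. -/
def IsSpectrum {n : ℕ} (M : Matrix (Fin n) (Fin n) ℝ) (ρ : Fin n → ℝ) : Prop :=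
  Antitone ρ ∧ ∃ (hM : M.IsHermitian) (e : Fin n ≃ Fin n), ∀ i, ρ i = hM.eigenvalues (e i)

/-- Distance Laplacian energy, given the eigenvalue list `ρ`. -/
noncomputable def DLEnergy {n : ℕ} (G : SimpleGraph (Fin n)) (ρ : Fin n → ℝ) : ℝ :=
  ∑ i, |ρ i - 2 * wiener G / n|

/-- The graph has diameter two. -/
def diamTwo (G : SimpleGraph V) : Prop :=
  (∀ u v, G.dist u v ≤ 2) ∧ ∃ u v, G.dist u v = 2

/-- The multiset of eigenvalues of a Hermitian matrix. -/
noncomputable def eigMultiset (M : Matrix V V ℝ) (hM : M.IsHermitian) : Multiset ℝ :=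
  Finset.univ.val.map hM.eigenvalues

section AuxProof
open Polynomial

lemma dist_formula (G : SimpleGraph V) [DecidableRel G.Adj] (hconn : G.Connected) (hdiam : diamTwo G) (u v : V) :
    (G.dist u v : ℝ) = (if u = v then 0 else if G.Adj u v then 1 else 2) := by
  by_cases h : u = v
  · simp [h]
  by_cases ha : G.Adj u v
  · simp [h, ha, SimpleGraph.dist_eq_one_iff_adj.mpr ha]
  · simp only [h, ha, if_false]
    have h1 : G.dist u v ≤ 2 := hdiam.1 u v
    have h2 : G.dist u v ≠ 0 := by
      simp [hconn.dist_eq_zero_iff, h]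
    have h3 : G.dist u v ≠ 1 := fun hc => ha (SimpleGraph.dist_eq_one_iff_adj.mp hc)
    have : G.dist u v = 2 := by omega
    rw [this]; norm_num

lemma distLap_eq {n : ℕ} (G : SimpleGraph (Fin n)) [DecidableRel G.Adj]
    (hconn : G.Connected) (hdiam : diamTwo G) :
    distLap G = (2*(n:ℝ)) • (1 : Matrix (Fin n) (Fin n) ℝ)
      - (2:ℝ) • (Matrix.of fun _ _ => (1:ℝ)) - G.lapMatrix ℝ := by
  have hdeg : ∀ v : Fin n, (G.degree v : ℝ) = ∑ u, (if G.Adj v u then (1:ℝ) else 0) := by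
    intro v
    rw [SimpleGraph.degree, Finset.card_eq_sum_ones, SimpleGraph.neighborFinset_eq_filter]
    push_cast
    rw [Finset.sum_filter]
  have htrans : ∀ v : Fin n, (transmission G v : ℝ) = 2*n - 2 - G.degree v := by
    intro v
    rw [transmission]
    push_cast
    have : ∀ u : Fin n, (G.dist v u : ℝ)
        = 2 - (if v = u then 2 else 0) - (if G.Adj v u then 1 else 0) := by
      intro u
      rw [dist_formula G hconn hdiam]
      by_cases h : v = u
      · simp [h]
      by_cases ha : G.Adj v u <;> simp [h, ha] <;> norm_num
    simp_rw [this, Finset.sum_sub_distrib, Finset.sum_const, Finset.sum_ite_eq,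
      Finset.mem_univ, if_true, hdeg]
    simp [mul_comm]
  ext i j
  simp only [distLap, Matrix.sub_apply, Matrix.smul_apply, Matrix.of_apply,
    SimpleGraph.lapMatrix, SimpleGraph.degMatrix, SimpleGraph.adjMatrix_apply,
    Matrix.diagonal_apply, distMatrix, Matrix.one_apply, smul_eq_mul, dist_formula G hconn hdiam]
  by_cases h : i = j
  · subst h; simp [htrans, G.irrefl]; try ring
  · by_cases ha : G.Adj i j <;> simp [h, ha, Ne.symm h] <;> ring

lemma charpoly_conj_unitary {n : ℕ} (U A : Matrix (Fin n) (Fin n) ℝ)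
    (hU : U ∈ Matrix.unitaryGroup (Fin n) ℝ) :
    (U * A * star U).charpoly = A.charpoly := by
  have hmul : U * star U = 1 := Matrix.mem_unitaryGroup_iff.mp hU
  have hC : ∀ (B B' : Matrix (Fin n) (Fin n) ℝ),
      (B * B').map (C : ℝ →+* ℝ[X]) = B.map C * B'.map C := fun B B' => Matrix.map_mul
  have hcomm : ∀ (B : Matrix (Fin n) (Fin n) ℝ[X]),
      Matrix.scalar (Fin n) (X : ℝ[X]) * B = B * Matrix.scalar (Fin n) (X : ℝ[X]) :=
    fun B => (Matrix.scalar_commute (X : ℝ[X]) (fun r' => Commute.all _ _) B).eq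
  have hchar : charmatrix (U * A * star U) = U.map C * charmatrix A * (star U).map C := by
    rw [charmatrix, charmatrix]
    simp only [RingHom.mapMatrix_apply]
    rw [Matrix.mul_sub, Matrix.sub_mul]
    congr 1
    · rw [← hcomm (U.map C), Matrix.mul_assoc, ← hC, hmul]
      simp [Matrix.scalar_apply]
    · rw [← hC, ← hC]
  rw [Matrix.charpoly, Matrix.charpoly, hchar, Matrix.det_mul, Matrix.det_mul]
  have h2 : (U.map (C : ℝ →+* ℝ[X])).det * ((star U).map C).det = 1 := by
    rw [← Matrix.det_mul, ← hC, hmul]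
    simp
  rw [mul_right_comm, h2, one_mul]

lemma charpoly_diag {n : ℕ} (d : Fin n → ℝ) :
    (Matrix.diagonal d).charpoly = ∏ i, (X - C (d i)) := by
  rw [Matrix.charpoly_of_upperTriangular _ (Matrix.blockTriangular_diagonal d)]
  simp

lemma eig_multiset_eq {n : ℕ} (M : Matrix (Fin n) (Fin n) ℝ) (hM : M.IsHermitian)
    (U : Matrix (Fin n) (Fin n) ℝ) (hU : U ∈ Matrix.unitaryGroup (Fin n) ℝ)
    (d : Fin n → ℝ) (h : M = U * Matrix.diagonal d * star U) :
    Finset.univ.val.map hM.eigenvalues = Finset.univ.val.map d := by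
  have key : ∀ (f : Fin n → ℝ), M.charpoly = ∏ i, (X - C (f i)) →
      M.charpoly.roots = Finset.univ.val.map f := by
    intro f hf
    rw [hf, Finset.prod_eq_multiset_prod,
      show Multiset.map (fun i => X - C (f i)) Finset.univ.val
        = Multiset.map (fun a => X - C a) (Multiset.map f Finset.univ.val) from
        (Multiset.map_map (fun a => X - C a) f Finset.univ.val).symm,
      Polynomial.roots_multiset_prod_X_sub_C]
  have h1 : M.charpoly = ∏ i, (X - C (d i)) := by
    rw [h, charpoly_conj_unitary _ _ hU, charpoly_diag]
  have h2 : M.charpoly = ∏ i, (X - C (hM.eigenvalues i)) := by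
    have hs := hM.spectral_theorem
    rw [RCLike.ofReal_real_eq_id] at hs
    simp only [Function.comp_def, id_eq, Unitary.conjStarAlgAut_apply, Unitary.coe_star] at hs
    conv_lhs => rw [hs]
    rw [charpoly_conj_unitary _ _ (hM.eigenvectorUnitary).2, charpoly_diag]
  rw [← key _ h2, ← key _ h1]

section
variable {n : ℕ} (G : SimpleGraph (Fin n)) [DecidableRel G.Adj]

local notation "L" => G.lapMatrix ℝ

lemma hermL : (G.lapMatrix ℝ).IsHermitian := (SimpleGraph.posSemidef_lapMatrix ℝ G).1

-- column sums of U vanish for nonzero eigenvalues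
lemma col_sum_zero (j : Fin n) (hj : (hermL G).eigenvalues j ≠ 0) :
    ∑ k, ((hermL G).eigenvectorUnitary : Matrix (Fin n) (Fin n) ℝ) k j = 0 := by
  set hL := hermL G
  have hF1 : L *ᵥ ⇑(hL.eigenvectorBasis j) = hL.eigenvalues j • ⇑(hL.eigenvectorBasis j) :=
    hL.mulVec_eigenvectorBasis j
  have hrow : ∀ k, ∑ l, (G.lapMatrix ℝ) k l = 0 := by
    intro k
    have := congrFun (G.lapMatrix_mulVec_const_eq_zero (R := ℝ)) k
    simpa [Matrix.mulVec, dotProduct] using this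
  have h2 : ∑ k, (L *ᵥ ⇑(hL.eigenvectorBasis j)) k = 0 := by
    simp only [Matrix.mulVec, dotProduct]
    rw [Finset.sum_comm]
    refine Finset.sum_eq_zero fun l _ => ?_
    rw [← Finset.sum_mul]
    have : ∑ k, (G.lapMatrix ℝ) k l = 0 := by
      calc ∑ k, (G.lapMatrix ℝ) k l = ∑ k, (G.lapMatrix ℝ) l k :=
            Finset.sum_congr rfl fun k _ => (G.isSymm_lapMatrix (R := ℝ)).apply l k
        _ = 0 := hrow l
    rw [this, zero_mul]
  rw [hF1] at h2
  simp only [Pi.smul_apply, smul_eq_mul, ← Finset.mul_sum] at h2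
  have := mul_eq_zero.mp h2
  rcases this with h | h
  · exact absurd h hj
  · simpa [Matrix.IsHermitian.eigenvectorUnitary_apply] using h

-- columns with zero eigenvalue are constant
lemma col_const (hconn : G.Connected) (j : Fin n) (hj : (hermL G).eigenvalues j = 0) :
    ∀ k l : Fin n, ((hermL G).eigenvectorUnitary : Matrix (Fin n) (Fin n) ℝ) k j
      = ((hermL G).eigenvectorUnitary : Matrix (Fin n) (Fin n) ℝ) l j := by
  set hL := hermL G
  have hF1 : L *ᵥ ⇑(hL.eigenvectorBasis j) = hL.eigenvalues j • ⇑(hL.eigenvectorBasis j) :=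
    hL.mulVec_eigenvectorBasis j
  rw [hj, zero_smul] at hF1
  have h0 : Matrix.toLin' (G.lapMatrix ℝ) ⇑(hL.eigenvectorBasis j) = 0 := by
    rw [Matrix.toLin'_apply, hF1]
  have := (G.lapMatrix_mulVec_eq_zero_iff_forall_reachable).mp hF1
  intro k l
  simpa [Matrix.IsHermitian.eigenvectorUnitary_apply] using this k l (hconn.preconnected k l)

end

section
variable {n : ℕ} (G : SimpleGraph (Fin n)) [DecidableRel G.Adj]

lemma col_orthonormal (i j : Fin n) :
    ∑ k, ((hermL G).eigenvectorUnitary : Matrix (Fin n) (Fin n) ℝ) k i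
      * ((hermL G).eigenvectorUnitary : Matrix (Fin n) (Fin n) ℝ) k j
      = (1 : Matrix (Fin n) (Fin n) ℝ) i j := by
  set U := ((hermL G).eigenvectorUnitary : Matrix (Fin n) (Fin n) ℝ)
  have h : star U * U = 1 := Matrix.mem_unitaryGroup_iff'.mp (hermL G).eigenvectorUnitary.2
  have := congrFun (congrFun h i) j
  simpa [Matrix.mul_apply, Matrix.star_apply] using this

-- at most one zero eigenvalue; squared column sum is n for it
lemma sum_col_sq (hn : 0 < n) (hconn : G.Connected) (j : Fin n)
    (hj : (hermL G).eigenvalues j = 0) :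
    (∑ k, ((hermL G).eigenvectorUnitary : Matrix (Fin n) (Fin n) ℝ) k j) ^ 2 = n := by
  set U := ((hermL G).eigenvectorUnitary : Matrix (Fin n) (Fin n) ℝ) with hU
  set c := U ⟨0, hn⟩ j with hc
  have hcol := col_const G hconn j hj
  have hconst : ∀ k, U k j = c := fun k => hcol k ⟨0, hn⟩
  have hnorm : (n : ℝ) * c ^ 2 = 1 := by
    have := col_orthonormal G j j
    simp only [Matrix.one_apply_eq] at this
    calc (n : ℝ) * c ^ 2 = ∑ _k : Fin n, c ^ 2 := by simp [mul_comm]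
      _ = ∑ k, U k j * U k j := Finset.sum_congr rfl fun k _ => by rw [hconst k]; ring
      _ = 1 := this
  have hsum : ∑ k, U k j = n * c := by
    simp [hconst, mul_comm]
  rw [hsum]
  have hr : ((n:ℝ) * c)^2 = (n:ℝ) * ((n:ℝ) * c^2) := by ring
  rw [hr, hnorm, mul_one]

lemma zero_unique (hn : 0 < n) (hconn : G.Connected) (i j : Fin n) (hne : i ≠ j)
    (hi : (hermL G).eigenvalues i = 0) (hj : (hermL G).eigenvalues j = 0) : False := by
  set U := ((hermL G).eigenvectorUnitary : Matrix (Fin n) (Fin n) ℝ) with hU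
  have hconsti : ∀ k, U k i = U ⟨0, hn⟩ i := fun k => col_const G hconn i hi k ⟨0, hn⟩
  have hconstj : ∀ k, U k j = U ⟨0, hn⟩ j := fun k => col_const G hconn j hj k ⟨0, hn⟩
  have horth := col_orthonormal G i j
  rw [Matrix.one_apply_ne hne] at horth
  have hsum2 : ∑ k, U k i * U k j = (n:ℝ) * (U ⟨0, hn⟩ i * U ⟨0, hn⟩ j) := by
    rw [Finset.sum_congr rfl (fun k _ => by rw [hconsti k, hconstj k])]
    simp [mul_comm]
  have : (n : ℝ) * (U ⟨0, hn⟩ i * U ⟨0, hn⟩ j) = 0 := by rw [← hsum2]; exact horth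
  have hci : U ⟨0, hn⟩ i ≠ 0 := by
    intro h
    have := sum_col_sq G hn hconn i hi
    rw [show ∑ k, U k i = 0 by simp [hconsti, h]] at this
    have hz : (n:ℝ) = 0 := by simpa using this.symm
    exact absurd (Nat.cast_eq_zero.mp hz) hn.ne'
  have hcj : U ⟨0, hn⟩ j ≠ 0 := by
    intro h
    have := sum_col_sq G hn hconn j hj
    rw [show ∑ k, U k j = 0 by simp [hconstj, h]] at this
    have hz : (n:ℝ) = 0 := by simpa using this.symm
    exact absurd (Nat.cast_eq_zero.mp hz) hn.ne'
  have hn' : (n:ℝ) ≠ 0 := Nat.cast_ne_zero.mpr hn.ne'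
  rcases mul_eq_zero.mp this with h | h
  · exact hn' h
  · rcases mul_eq_zero.mp h with h' | h' <;> [exact hci h'; exact hcj h']

lemma starU_J_U (hn : 0 < n) (hconn : G.Connected) :
    star ((hermL G).eigenvectorUnitary : Matrix (Fin n) (Fin n) ℝ)
      * (Matrix.of fun _ _ => (1:ℝ))
      * ((hermL G).eigenvectorUnitary : Matrix (Fin n) (Fin n) ℝ)
    = Matrix.diagonal (fun j => if (hermL G).eigenvalues j = 0 then (n:ℝ) else 0) := by
  set U := ((hermL G).eigenvectorUnitary : Matrix (Fin n) (Fin n) ℝ) with hU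
  ext i j
  have hentry : (star U * (Matrix.of fun _ _ => (1:ℝ) : Matrix (Fin n) (Fin n) ℝ) * U) i j
      = (∑ k, U k i) * (∑ l, U l j) := by
    simp only [Matrix.mul_apply, Matrix.star_apply, star_trivial, Matrix.of_apply, mul_one]
    rw [Finset.mul_sum]
  rw [hentry]
  by_cases hij : i = j
  · subst hij
    by_cases h0 : (hermL G).eigenvalues i = 0
    · rw [Matrix.diagonal_apply_eq, if_pos h0, ← pow_two]
      exact sum_col_sq G hn hconn i h0
    · rw [Matrix.diagonal_apply_eq, if_neg h0, col_sum_zero G i h0, zero_mul]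
  · rw [Matrix.diagonal_apply_ne _ hij]
    by_cases h0 : (hermL G).eigenvalues i = 0
    · by_cases h1 : (hermL G).eigenvalues j = 0
      · exact (zero_unique G hn hconn i j hij h0 h1).elim
      · rw [col_sum_zero G j h1, mul_zero]
    · rw [col_sum_zero G i h0, zero_mul]

end

section
variable {n : ℕ} (G : SimpleGraph (Fin n)) [DecidableRel G.Adj]

lemma distLap_diagonalization (hn : 0 < n) (hconn : G.Connected) (hdiam : diamTwo G) :
    distLap G = ((hermL G).eigenvectorUnitary : Matrix (Fin n) (Fin n) ℝ)
      * Matrix.diagonal (fun j => if (hermL G).eigenvalues j = 0 then 0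
          else 2*(n:ℝ) - (hermL G).eigenvalues j)
      * star ((hermL G).eigenvectorUnitary : Matrix (Fin n) (Fin n) ℝ) := by
  set hL := hermL G
  set U := (hL.eigenvectorUnitary : Matrix (Fin n) (Fin n) ℝ) with hUdef
  have hUU' : U * star U = 1 := Matrix.mem_unitaryGroup_iff.mp hL.eigenvectorUnitary.2
  have hU'U : star U * U = 1 := Matrix.mem_unitaryGroup_iff'.mp hL.eigenvectorUnitary.2
  have hL3 : star U * G.lapMatrix ℝ * U = Matrix.diagonal hL.eigenvalues := by
    have := hL.conjStarAlgAut_star_eigenvectorUnitary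
    rw [RCLike.ofReal_real_eq_id] at this
    simpa [Function.comp_def] using this
  have hJ : star U * (Matrix.of fun _ _ => (1:ℝ)) * U
      = Matrix.diagonal (fun j => if hL.eigenvalues j = 0 then (n:ℝ) else 0) :=
    starU_J_U G hn hconn
  have key : star U * distLap G * U
      = Matrix.diagonal (fun j => if hL.eigenvalues j = 0 then 0
          else 2*(n:ℝ) - hL.eigenvalues j) := by
    rw [distLap_eq G hconn hdiam]
    rw [Matrix.mul_sub, Matrix.sub_mul, Matrix.mul_sub, Matrix.sub_mul]
    rw [Matrix.mul_smul, Matrix.smul_mul, Matrix.mul_one, hU'U]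
    rw [Matrix.mul_smul, Matrix.smul_mul, hJ, hL3]
    ext i j
    by_cases hij : i = j
    · subst hij
      simp only [Matrix.sub_apply, Matrix.smul_apply, Matrix.one_apply_eq,
        Matrix.diagonal_apply_eq, smul_eq_mul]
      by_cases h0 : hL.eigenvalues i = 0 <;> simp [h0] <;> ring
    · simp [Matrix.diagonal_apply_ne _ hij, Matrix.one_apply_ne hij]
  calc distLap G = (U * star U) * distLap G * (U * star U) := by rw [hUU']; simp
    _ = U * (star U * distLap G * U) * star U := by
        simp only [Matrix.mul_assoc]
    _ = _ := by rw [key]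

lemma posSemidef_distLap : (distLap G).PosSemidef := by
  refine Matrix.PosSemidef.of_dotProduct_mulVec_nonneg ?_ ?_
  · show (distLap G)ᴴ = distLap G
    ext i j
    simp only [Matrix.conjTranspose_apply, distLap, Matrix.sub_apply, distMatrix,
      Matrix.diagonal_apply, star_trivial]
    rw [SimpleGraph.dist_comm]
    by_cases h : i = j <;> simp [h, eq_comm]
  · intro x
    rw [star_trivial]
    set d : Fin n → Fin n → ℝ := fun i j => (G.dist i j : ℝ) with hd
    have hdsym : ∀ i j, d i j = d j i := fun i j => by simp [hd, SimpleGraph.dist_comm]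
    have hdnn : ∀ i j, 0 ≤ d i j := fun i j => by positivity
    have hA : dotProduct x (distLap G *ᵥ x)
        = ∑ i, ∑ j, (d i j * x i ^ 2 - d i j * (x i * x j)) := by
      simp only [dotProduct, Matrix.mulVec, dotProduct, distLap, Matrix.sub_apply,
        Matrix.diagonal_apply, distMatrix, transmission]
      refine Finset.sum_congr rfl fun i _ => ?_
      rw [Finset.mul_sum]
      have hpt : ∀ j, x i * (((if i = j then ((∑ u, G.dist i u : ℕ) : ℝ) else 0) - (G.dist i j : ℝ)) * x j)
          = (if i = j then ((∑ u, G.dist i u : ℕ) : ℝ) * (x i * x j) else 0) - d i j * (x i * x j) := by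
        intro j; by_cases h : i = j <;> simp [h, hd] <;> ring
      rw [Finset.sum_congr rfl fun j _ => hpt j]
      rw [Finset.sum_sub_distrib, Finset.sum_sub_distrib]
      congr 1
      rw [Finset.sum_ite_eq, if_pos (Finset.mem_univ i)]
      push_cast
      rw [Finset.sum_mul]
      exact Finset.sum_congr rfl fun j _ => by simp only [hd]; ring
    have hswap : ∑ i, ∑ j, (d i j * x j ^ 2 - d i j * (x j * x i))
        = ∑ i, ∑ j, (d i j * x i ^ 2 - d i j * (x i * x j)) := by
      rw [Finset.sum_comm]
      exact Finset.sum_congr rfl fun i _ => Finset.sum_congr rfl fun j _ => by rw [hdsym]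
    have h2 : (2:ℝ) * dotProduct x (distLap G *ᵥ x)
        = ∑ i, ∑ j, d i j * (x i - x j)^2 := by
      calc (2:ℝ) * dotProduct x (distLap G *ᵥ x)
          = (∑ i, ∑ j, (d i j * x i ^ 2 - d i j * (x i * x j)))
            + (∑ i, ∑ j, (d i j * x j ^ 2 - d i j * (x j * x i))) := by rw [hA, hswap]; ring
        _ = ∑ i, ∑ j, d i j * (x i - x j)^2 := by
            rw [← Finset.sum_add_distrib]
            refine Finset.sum_congr rfl fun i _ => ?_
            rw [← Finset.sum_add_distrib]
            exact Finset.sum_congr rfl fun j _ => by ring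
    have h3 : (0:ℝ) ≤ ∑ i, ∑ j, d i j * (x i - x j)^2 :=
      Finset.sum_nonneg fun i _ => Finset.sum_nonneg fun j _ => by
        have := hdnn i j; positivity
    linarith
end

section
open Polynomial

-- multiset of values of a spectrum list
lemma isSpectrum_multiset {n : ℕ} {M : Matrix (Fin n) (Fin n) ℝ} {ρ : Fin n → ℝ}
    (h : ∃ (hM : M.IsHermitian) (e : Fin n ≃ Fin n), ∀ i, ρ i = hM.eigenvalues (e i))
    (hM' : M.IsHermitian) :
    Finset.univ.val.map ρ = Finset.univ.val.map hM'.eigenvalues := by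
  obtain ⟨hM, e, he⟩ := h
  have h1 : Finset.univ.val.map ρ = Finset.univ.val.map (fun i => hM.eigenvalues (e i)) :=
    Multiset.map_congr rfl (fun i _ => he i)
  have h2 : Finset.univ.val.map (fun i => hM.eigenvalues (e i))
      = (Finset.univ.val.map (⇑e)).map hM.eigenvalues := by
    rw [Multiset.map_map]; rfl
  have h3 : Finset.univ.val.map (⇑e) = Finset.univ.val := by
    have := Finset.map_univ_equiv e
    calc Finset.univ.val.map (⇑e) = (Finset.univ.map e.toEmbedding).val := by
          rw [Finset.map_val]; rfl
      _ = Finset.univ.val := by rw [this]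
  rw [h1, h2, h3]

theorem stmt0' {n : ℕ} (hn : 2 ≤ n) (G : SimpleGraph (Fin n)) [DecidableRel G.Adj]
    (hconn : G.Connected) (hdiam : diamTwo G)
    (ρ μ : Fin n → ℝ)
    (hρanti : Antitone ρ)
    (hρspec : ∃ (hM : (distLap G).IsHermitian) (e : Fin n ≃ Fin n),
        ∀ i, ρ i = hM.eigenvalues (e i))
    (hμanti : Antitone μ)
    (hμspec : ∃ (hM : (G.lapMatrix ℝ).IsHermitian) (e : Fin n ≃ Fin n),
        ∀ i, μ i = hM.eigenvalues (e i)) :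
    ∀ i : Fin n, (i : ℕ) < n - 1 →
      ρ i = 2 * (n : ℝ) - μ ⟨n - 2 - (i : ℕ), Nat.lt_of_le_of_lt (Nat.sub_le _ _) (by omega)⟩ := by
  have hn0 : 0 < n := by omega
  set hL := hermL G with hLdef
  set μ' := hL.eigenvalues with hμ'def
  set e : Fin n → ℝ := fun j => if μ' j = 0 then 0 else 2*(n:ℝ) - μ' j with hedef
  have hDLps := posSemidef_distLap G
  have hDL : (distLap G).IsHermitian := hDLps.1
  have hdiag := distLap_diagonalization G hn0 hconn hdiam
  -- multiset identities
  have me : Finset.univ.val.map hDL.eigenvalues = Finset.univ.val.map e :=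
    eig_multiset_eq _ hDL _ hL.eigenvectorUnitary.2 _ hdiag
  have mρ : Finset.univ.val.map ρ = Finset.univ.val.map e :=
    (isSpectrum_multiset hρspec hDL).trans me
  have mμ : Finset.univ.val.map μ = Finset.univ.val.map μ' :=
    isSpectrum_multiset hμspec hL
  -- basic eigenvalue facts
  have hμ'nonneg : ∀ j, 0 ≤ μ' j := fun j =>
    (SimpleGraph.posSemidef_lapMatrix ℝ G).eigenvalues_nonneg j
  have hμ'le : ∀ j, μ' j ≤ 2*(n:ℝ) := by
    intro j
    have hmem : e j ∈ Finset.univ.val.map e := Multiset.mem_map_of_mem _ (Finset.mem_univ j)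
    rw [← me] at hmem
    obtain ⟨k, _, hk⟩ := Multiset.mem_map.mp hmem
    have hk0 : 0 ≤ e j := hk ▸ hDLps.eigenvalues_nonneg k
    by_cases h0 : μ' j = 0
    · rw [h0]; positivity
    · rw [hedef] at hk0; simp only [if_neg h0] at hk0; linarith
  -- μ as values of μ'
  obtain ⟨hML, eqv, heqv⟩ := hμspec
  have heqv' : ∀ i, μ i = μ' (eqv i) := heqv
  have hμnonneg : ∀ i, 0 ≤ μ i := fun i => (heqv' i) ▸ hμ'nonneg (eqv i)
  have hμle : ∀ i, μ i ≤ 2*(n:ℝ) := fun i => (heqv' i) ▸ hμ'le (eqv i)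
  -- existence of zero eigenvalue
  have hdet : (G.lapMatrix ℝ).det = 0 := by
    rw [← Matrix.exists_mulVec_eq_zero_iff]
    refine ⟨fun _ => 1, ?_, G.lapMatrix_mulVec_const_eq_zero⟩
    intro h
    have := congrFun h ⟨0, hn0⟩
    simp at this
  have hexists : ∃ j, μ' j = 0 := by
    have := hL.det_eq_prod_eigenvalues
    rw [hdet] at this
    have := Finset.prod_eq_zero_iff.mp this.symm
    obtain ⟨j, _, hj⟩ := this
    exact ⟨j, by exact_mod_cast hj⟩
  -- μ (last) = 0 and μ i ≠ 0 for i < n-1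
  have hlast : μ ⟨n-1, by omega⟩ = 0 := by
    obtain ⟨j0, hj0⟩ := hexists
    have h1 : μ (eqv.symm j0) = 0 := by rw [heqv' (eqv.symm j0), Equiv.apply_symm_apply, hj0]
    have h2 : μ ⟨n-1, by omega⟩ ≤ 0 := h1 ▸ hμanti (by
      rw [Fin.le_def]
      have := (eqv.symm j0).isLt
      show (eqv.symm j0 : ℕ) ≤ n - 1
      omega)
    exact le_antisymm h2 (hμnonneg _)
  have hnz : ∀ i : Fin n, (i:ℕ) < n - 1 → μ i ≠ 0 := by
    intro i hi h0
    have hine : eqv i ≠ eqv ⟨n-1, by omega⟩ := by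
      intro h; apply absurd (eqv.injective h); intro h'
      have := congrArg Fin.val h'; simp at this; omega
    exact zero_unique G hn0 hconn (eqv i) (eqv ⟨n-1, by omega⟩) hine
      ((heqv' i).symm.trans h0) ((heqv' _).symm.trans hlast)
  -- target function
  set t : Fin n → ℝ := fun i =>
    if h : (i:ℕ) < n - 1 then 2*(n:ℝ) - μ ⟨n-2-(i:ℕ), by omega⟩ else 0 with htdef
  set g : ℝ → ℝ := fun x => if x = 0 then 0 else 2*(n:ℝ) - x with hgdef
  have hinv : Function.Involutive (fun i : Fin n =>
      if h : (i:ℕ) < n - 1 then (⟨n-2-(i:ℕ), by omega⟩ : Fin n) else i) := by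
    intro i
    by_cases h : (i:ℕ) < n - 1
    · have h2 : n-2-(i:ℕ) < n - 1 := by omega
      simp only [dif_pos h, dif_pos h2]
      apply Fin.ext
      show n - 2 - (n - 2 - (i:ℕ)) = (i:ℕ)
      omega
    · have hfix : (fun i : Fin n => if h : (i:ℕ) < n - 1
          then (⟨n-2-(i:ℕ), by omega⟩ : Fin n) else i) i = i := dif_neg h
      rw [hfix, hfix]
  set σ : Equiv.Perm (Fin n) := hinv.toPerm _ with hσdef
  have htgμ : t = g ∘ μ ∘ σ := by
    funext i
    by_cases h : (i:ℕ) < n - 1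
    · have hσi : σ i = ⟨n-2-(i:ℕ), by omega⟩ := by
        simp [hσdef, Function.Involutive.toPerm, h]
      have h2 : (n-2-(i:ℕ)) < n - 1 := by omega
      have hne := hnz ⟨n-2-(i:ℕ), by omega⟩ h2
      simp only [htdef, h, dif_pos, Function.comp_apply, hσi, hgdef, if_neg hne]
    · have hieq : (i:ℕ) = n - 1 := by omega
      have hσi : σ i = i := by
        show (if h : (i:ℕ) < n - 1 then (⟨n-2-(i:ℕ), by omega⟩ : Fin n) else i) = i
        rw [dif_neg h]
      have hi' : i = ⟨n-1, by omega⟩ := by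
        apply Fin.ext
        show (i:ℕ) = n - 1
        omega
      simp only [htdef, h, dif_neg, not_false_iff, Function.comp_apply, hσi, hgdef]
      rw [hi', hlast]
      simp
  have hegμ' : e = g ∘ μ' := by
    funext j
    by_cases h : μ' j = 0 <;> simp [hedef, hgdef, h]
  -- multiset equality between t and ρ
  have mt : Finset.univ.val.map t = Finset.univ.val.map ρ := by
    rw [htgμ, mρ, hegμ']
    calc Finset.univ.val.map (g ∘ μ ∘ ⇑σ)
        = Finset.univ.val.map ((g ∘ μ) ∘ ⇑σ) := rfl
      _ = (Finset.univ.val.map (⇑σ)).map (g ∘ μ) := by rw [Multiset.map_map]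
      _ = Finset.univ.val.map (g ∘ μ) := by
          rw [show Finset.univ.val.map (⇑σ) = (Finset.univ.map σ.toEmbedding).val by
            rw [Finset.map_val]; rfl, Finset.map_univ_equiv]
      _ = (Finset.univ.val.map μ).map g := by rw [Multiset.map_map]
      _ = (Finset.univ.val.map μ').map g := by rw [mμ]
      _ = Finset.univ.val.map (g ∘ μ') := by rw [Multiset.map_map]
  -- t is antitone
  have htanti : Antitone t := by
    intro a b hab
    by_cases hb : (b:ℕ) < n - 1
    · have ha : (a:ℕ) < n - 1 := lt_of_le_of_lt (by exact_mod_cast hab) hb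
      simp only [htdef, ha, hb, dif_pos]
      have : μ (⟨n-2-(a:ℕ), by omega⟩ : Fin n) ≤ μ ⟨n-2-(b:ℕ), by omega⟩ := by
        apply hμanti
        show ((⟨n-2-(b:ℕ), by omega⟩ : Fin n) : ℕ) ≤ ((⟨n-2-(a:ℕ), by omega⟩ : Fin n) : ℕ)
        simp
        have : (a:ℕ) ≤ (b:ℕ) := hab
        omega
      linarith
    · by_cases ha : (a:ℕ) < n - 1
      · simp only [htdef, ha, hb, dif_pos, dif_neg, not_false_iff]
        have := hμle ⟨n-2-(a:ℕ), by omega⟩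
        linarith
      · simp [htdef, ha, hb]
  -- sorted lists coincide
  have hperm : List.Perm (List.ofFn ρ) (List.ofFn t) := by
    rw [← Multiset.coe_eq_coe, ← Fin.univ_val_map, ← Fin.univ_val_map, mt]
  haveI : IsAntisymm ℝ (· ≥ ·) := ⟨fun a b h1 h2 => le_antisymm h2 h1⟩
  have hsρ : (List.ofFn ρ).SortedGE := by
    rw [List.sortedGE_ofFn_iff]
    exact hρanti
  have hsτ : (List.ofFn t).SortedGE := by
    rw [List.sortedGE_ofFn_iff]
    exact htanti
  have heq : ρ = t := List.ofFn_injective (List.Perm.eq_of_sortedGE hsρ hsτ hperm)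
  intro i hi
  rw [heq]
  simp only [htdef, hi, dif_pos]
end

end AuxProof

theorem stmt0 {n : ℕ} (hn : 2 ≤ n) (G : SimpleGraph (Fin n)) [DecidableRel G.Adj]
    (hconn : G.Connected) (hdiam : diamTwo G)
    (ρ μ : Fin n → ℝ)
    (hρ : IsSpectrum (distLap G) ρ) (hμ : IsSpectrum (G.lapMatrix ℝ) μ) :
    ∀ i : Fin n, (i : ℕ) < n - 1 →
      ρ i = 2 * (n : ℝ) - μ ⟨n - 2 - (i : ℕ), by omega⟩ := by
  obtain ⟨hρa, hρs⟩ := hρ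
  obtain ⟨hμa, hμs⟩ := hμ
  exact stmt0' hn G hconn hdiam ρ μ hρa hρs hμa hμs
end

section
/- For a connected graph G of order n whose distance Laplacian eigenvalues are ρ^L_1 ≥ ... ≥ ρ^L_n = 0 and Wiener index W(G), the distance Laplacian energy satisfies DLE(G) = 2·max_{1≤j≤n} ( Σ_{i=1}^j ρ^L_i − 2jW(G)/n ). -/
open Finset Matrix BigOperators

variable {V : Type*} [Fintype V] [DecidableEq V]

lemma sum_eig_eq_trace {n : ℕ} (M : Matrix (Fin n) (Fin n) ℝ) (hM : M.IsHermitian) :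
    ∑ i, hM.eigenvalues i = M.trace := by
  rw [hM.trace_eq_sum_eigenvalues]
  simp

lemma card_filter_lt {n j : ℕ} (h : j ≤ n) :
    ((Finset.univ : Finset (Fin n)).filter (fun i : Fin n => (i : ℕ) < j)).card = j := by
  have himg : ((Finset.univ : Finset (Fin n)).filter (fun i : Fin n => (i : ℕ) < j)).image Fin.val
      = Finset.range j := by
    ext a
    simp only [Finset.mem_image, Finset.mem_filter, Finset.mem_univ, true_and, Finset.mem_range]
    constructor
    · rintro ⟨i, hi, rfl⟩; exact hi
    · intro ha; exact ⟨⟨a, lt_of_lt_of_le ha h⟩, ha, rfl⟩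
  calc ((Finset.univ : Finset (Fin n)).filter (fun i : Fin n => (i : ℕ) < j)).card
      = (((Finset.univ : Finset (Fin n)).filter (fun i : Fin n => (i : ℕ) < j)).image Fin.val).card :=
        (Finset.card_image_of_injective _ Fin.val_injective).symm
    _ = j := by rw [himg, Finset.card_range]

lemma key_lemma {n : ℕ} (hn : 1 ≤ n) (x : Fin n → ℝ) (hx : Antitone x)
    (h0 : ∑ i, x i = 0) :
    ∑ i, |x i| = 2 * (Finset.Icc 1 n).sup' (Finset.nonempty_Icc.mpr hn)
      (fun j => ∑ i ∈ Finset.univ.filter (fun i : Fin n => (i : ℕ) < j), x i) := by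
  classical
  set P : Finset (Fin n) := Finset.univ.filter (fun i => 0 < x i) with hPdef
  set k := P.card with hk
  -- P is downward closed
  have hdc : ∀ i j : Fin n, i ≤ j → j ∈ P → i ∈ P := by
    intro i j hij hj
    simp only [hPdef, Finset.mem_filter, Finset.mem_univ, true_and] at hj ⊢
    exact lt_of_lt_of_le hj (hx hij)
  have hP : ∀ i : Fin n, i ∈ P ↔ (i : ℕ) < k := by
    intro i
    constructor
    · intro hi
      have hsub : Finset.Iic i ⊆ P := fun j hj => hdc j i (Finset.mem_Iic.mp hj) hi
      have := Finset.card_le_card hsub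
      rw [Fin.card_Iic] at this
      omega
    · intro hik
      by_contra hi
      have hsub : P ⊆ Finset.Iio i := by
        intro j hj
        rw [Finset.mem_Iio]
        by_contra hji
        exact hi (hdc i j (le_of_not_gt hji) hj)
      have := Finset.card_le_card hsub
      rw [Fin.card_Iio] at this
      omega
  have habs : ∀ i, |x i| = 2 * max (x i) 0 - x i := by
    intro i
    rcases le_or_gt (x i) 0 with h | h
    · rw [abs_of_nonpos h, max_eq_right h]; ring
    · rw [abs_of_pos h, max_eq_left h.le]; ring
  have hsum_abs : ∑ i, |x i| = 2 * ∑ i, max (x i) 0 := by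
    simp_rw [habs]
    rw [Finset.sum_sub_distrib, h0, Finset.mul_sum]
    ring
  have hmaxP : ∑ i, max (x i) 0 = ∑ i ∈ P, x i := by
    rw [← Finset.sum_filter_add_sum_filter_not Finset.univ (fun i => 0 < x i)
      (fun i => max (x i) 0)]
    have h1 : ∑ i ∈ Finset.univ.filter (fun i => 0 < x i), max (x i) 0 = ∑ i ∈ P, x i :=
      Finset.sum_congr rfl (fun i hi => by
        simp only [hPdef, Finset.mem_filter, Finset.mem_univ, true_and] at hi
        exact max_eq_left hi.le)
    have h2 : ∑ i ∈ Finset.univ.filter (fun i => ¬ 0 < x i), max (x i) 0 = 0 :=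
      Finset.sum_eq_zero (fun i hi => by
        simp only [Finset.mem_filter, Finset.mem_univ, true_and, not_lt] at hi
        exact max_eq_right hi)
    rw [h1, h2, add_zero]
  have hkn : k ≤ n := by
    have := Finset.card_le_card (Finset.subset_univ P)
    simpa using this
  -- the sup' equals ∑ i ∈ P, x i
  have hsup : (Finset.Icc 1 n).sup' (Finset.nonempty_Icc.mpr hn)
      (fun j => ∑ i ∈ Finset.univ.filter (fun i : Fin n => (i : ℕ) < j), x i)
      = ∑ i ∈ P, x i := by
    apply le_antisymm
    · apply Finset.sup'_le
      intro j _
      calc ∑ i ∈ Finset.univ.filter (fun i : Fin n => (i : ℕ) < j), x i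
          ≤ ∑ i ∈ Finset.univ.filter (fun i : Fin n => (i : ℕ) < j), max (x i) 0 :=
            Finset.sum_le_sum (fun i _ => le_max_left _ _)
        _ ≤ ∑ i, max (x i) 0 :=
            Finset.sum_le_sum_of_subset_of_nonneg (Finset.subset_univ _)
              (fun i _ _ => le_max_right _ _)
        _ = ∑ i ∈ P, x i := hmaxP
    · rcases Nat.eq_zero_or_pos k with hk0 | hk1
      · -- all x i = 0
        have hPempty : P = ∅ := Finset.card_eq_zero.mp hk0
        have hxle : ∀ i, x i ≤ 0 := by
          intro i
          by_contra h
          have : i ∈ P := by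
            simp only [hPdef, Finset.mem_filter, Finset.mem_univ, true_and]
            exact lt_of_not_ge h
          rw [hPempty] at this; exact absurd this (Finset.notMem_empty i)
        have hx0 : ∀ i ∈ (Finset.univ : Finset (Fin n)), x i = 0 := by
          intro i _
          exact le_antisymm (hxle i)
            (by
              by_contra h
              have hlt : x i < 0 := lt_of_not_ge h
              have : ∑ j, x j < 0 := by
                apply Finset.sum_neg' (fun j _ => hxle j) ⟨i, Finset.mem_univ i, hlt⟩
              linarith)
        rw [hPempty, Finset.sum_empty]
        apply Finset.le_sup'_of_le _ (Finset.mem_Icc.mpr ⟨le_refl 1, hn⟩)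
        apply le_of_eq
        exact (Finset.sum_eq_zero (fun i hi => hx0 i (Finset.mem_univ i))).symm
      · apply Finset.le_sup'_of_le _ (Finset.mem_Icc.mpr ⟨hk1, hkn⟩)
        apply le_of_eq
        apply Finset.sum_congr _ (fun _ _ => rfl)
        ext i
        simp only [hPdef, Finset.mem_filter, Finset.mem_univ, true_and]
        constructor
        · intro h; exact (hP i).mp (by simp [hPdef, h])
        · intro h; have := (hP i).mpr h; simpa [hPdef] using this
  rw [hsum_abs, hmaxP, hsup]

theorem stmt3 {n : ℕ} (hn : 1 ≤ n) (G : SimpleGraph (Fin n)) (hconn : G.Connected)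
    (ρ : Fin n → ℝ) (hρ : IsSpectrum (distLap G) ρ) :
    DLEnergy G ρ = 2 * (Finset.Icc 1 n).sup' (Finset.nonempty_Icc.mpr hn)
      (fun j => (∑ i ∈ Finset.univ.filter (fun i : Fin n => (i : ℕ) < j), ρ i)
        - 2 * (j : ℝ) * wiener G / n) := by
  obtain ⟨hanti, hM, e, he⟩ := hρ
  have hn0 : (n : ℝ) ≠ 0 := Nat.cast_ne_zero.mpr (by omega)
  have htr : (distLap G).trace = 2 * wiener G := by
    unfold distLap wiener
    rw [Matrix.trace_sub, Matrix.trace_diagonal]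
    simp [distMatrix, Matrix.trace, Matrix.diag, SimpleGraph.dist_self]
    ring
  have hsum : ∑ i, ρ i = 2 * wiener G := by
    rw [Finset.sum_congr rfl (fun i _ => he i), Equiv.sum_comp e hM.eigenvalues,
      sum_eig_eq_trace _ hM, htr]
  set x : Fin n → ℝ := fun i => ρ i - 2 * wiener G / n with hxdef
  have hxa : Antitone x := fun i j hij => sub_le_sub_right (hanti hij) _
  have h0 : ∑ i, x i = 0 := by
    simp only [hxdef, Finset.sum_sub_distrib, Finset.sum_const, Finset.card_univ,
      Fintype.card_fin, nsmul_eq_mul, hsum]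
    field_simp
    ring
  have hkey := key_lemma hn x hxa h0
  have hfun : ∀ j ∈ Finset.Icc 1 n,
      (∑ i ∈ Finset.univ.filter (fun i : Fin n => (i : ℕ) < j), ρ i)
        - 2 * (j : ℝ) * wiener G / n
      = ∑ i ∈ Finset.univ.filter (fun i : Fin n => (i : ℕ) < j), x i := by
    intro j hj
    rw [Finset.mem_Icc] at hj
    simp only [hxdef, Finset.sum_sub_distrib, Finset.sum_const, card_filter_lt hj.2,
      nsmul_eq_mul]
    ring
  rw [show DLEnergy G ρ = ∑ i, |x i| from rfl, hkey]
  congr 1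
  exact (Finset.sup'_congr _ rfl hfun).symm
end

section
/- Let G be a connected graph of order n ≥ 3 and size m with diameter 2, σ the number of distance Laplacian eigenvalues strictly greater than 2W(G)/n and t the number of Laplacian eigenvalues strictly greater than 2m/n. Then σ ≥ n − (t+1). -/
open Finset Matrix BigOperators

variable {V : Type*} [Fintype V] [DecidableEq V]

section AuxCharpoly

open Polynomial

variable {n : ℕ}

lemma aux_charpoly_conj (U B V : Matrix (Fin n) (Fin n) ℝ)
    (h1 : U * V = 1) : (U * B * V).charpoly = B.charpoly := by
  have hC : ∀ X Y : Matrix (Fin n) (Fin n) ℝ,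
      (X * Y).map (C : ℝ →+* ℝ[X]) = X.map C * Y.map C := fun X Y => Matrix.map_mul
  have h1' : U.map (C : ℝ →+* ℝ[X]) * V.map C = 1 := by
    rw [← hC, h1]; simp
  have hcomm : ∀ M : Matrix (Fin n) (Fin n) ℝ[X],
      M * Matrix.scalar (Fin n) X = Matrix.scalar (Fin n) X * M :=
    fun M => (Matrix.scalar_commute X (fun r => Commute.all _ _) M).symm
  have hcm : charmatrix (U * B * V) = U.map C * charmatrix B * V.map C := by
    unfold charmatrix
    simp only [RingHom.mapMatrix_apply]
    rw [Matrix.mul_sub, Matrix.sub_mul]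
    congr 1
    · rw [hcomm, mul_assoc, h1', mul_one]
    · rw [← hC, ← hC]
  rw [Matrix.charpoly, Matrix.charpoly, hcm, det_mul, det_mul, mul_comm, ← mul_assoc,
    ← det_mul, mul_eq_one_comm.mp h1', det_one, one_mul]

lemma aux_charpoly_diagonal (d : Fin n → ℝ) :
    (Matrix.diagonal d).charpoly = ∏ i, (X - C (d i)) := by
  have : charmatrix (Matrix.diagonal d) = Matrix.diagonal (fun i => X - C (d i)) := by
    ext i j
    by_cases h : i = j
    · subst h; simp
    · simp [charmatrix_apply_ne _ _ _ h, Matrix.diagonal_apply_ne _ h]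
  rw [Matrix.charpoly, this, det_diagonal]

lemma aux_roots_prod (f : Fin n → ℝ) :
    (∏ i, (X - C (f i))).roots = Multiset.map f Finset.univ.val := by
  have := Polynomial.roots_multiset_prod_X_sub_C (Multiset.map f Finset.univ.val)
  rw [Multiset.map_map] at this
  rw [← this]
  rfl

/-- If a Hermitian matrix is unitarily conjugate to `diagonal g`, its eigenvalue
multiset is the multiset of values of `g`. -/
lemma aux_eig_multiset (M : Matrix (Fin n) (Fin n) ℝ) (hM : M.IsHermitian)
    (g : Fin n → ℝ) (U : Matrix (Fin n) (Fin n) ℝ) (hU : U * star U = 1)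
    (hdiag : star U * (M * U) = Matrix.diagonal g) :
    Multiset.map hM.eigenvalues Finset.univ.val = Multiset.map g Finset.univ.val := by
  have hU' : star U * U = 1 := mul_eq_one_comm.mp hU
  have hMeq : M = U * Matrix.diagonal g * star U := by
    rw [← hdiag]
    calc M = (U * star U) * (M * (U * star U)) := by rw [hU]; simp
    _ = U * (star U * (M * U)) * star U := by noncomm_ring
  have h1 : M.charpoly = ∏ i, (X - C (g i)) := by
    rw [hMeq, aux_charpoly_conj _ _ _ hU, aux_charpoly_diagonal]
  have h2 : M.charpoly = ∏ i, (X - C (hM.eigenvalues i)) := by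
    have hspec := hM.spectral_theorem
    rw [RCLike.ofReal_real_eq_id] at hspec
    simp only [Function.id_comp] at hspec
    have hU2 : (hM.eigenvectorUnitary : Matrix (Fin n) (Fin n) ℝ) *
        star (hM.eigenvectorUnitary : Matrix (Fin n) (Fin n) ℝ) = 1 :=
      Matrix.mem_unitaryGroup_iff.mp hM.eigenvectorUnitary.2
    conv_lhs => rw [hspec]
    rw [Unitary.conjStarAlgAut_apply, aux_charpoly_conj _ _ _ hU2, aux_charpoly_diagonal]
  rw [← aux_roots_prod, ← aux_roots_prod, ← h1, ← h2]

end AuxCharpoly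

section Graph

variable {n : ℕ} (G : SimpleGraph (Fin n)) [DecidableRel G.Adj]

lemma aux_dist_cast (hconn : G.Connected) (hdiam : ∀ u v, G.dist u v ≤ 2) (u v : Fin n) :
    (G.dist u v : ℝ) = 2 - 2 * (if u = v then 1 else 0) - (if G.Adj u v then 1 else 0) := by
  by_cases huv : u = v
  · subst huv; simp [SimpleGraph.dist_self]
  · by_cases hadj : G.Adj u v
    · rw [SimpleGraph.dist_eq_one_iff_adj.mpr hadj]; simp [huv, hadj]; norm_num
    · have h1 : G.dist u v ≤ 2 := hdiam u v
      have hpos : 0 < G.dist u v := hconn.pos_dist_of_ne huv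
      have hne1 : G.dist u v ≠ 1 := fun h => hadj (SimpleGraph.dist_eq_one_iff_adj.mp h)
      have h2 : G.dist u v = 2 := by omega
      simp [h2, huv, hadj]

lemma aux_transmission_cast (hconn : G.Connected) (hdiam : ∀ u v, G.dist u v ≤ 2) (v : Fin n) :
    (transmission G v : ℝ) = 2 * n - 2 - G.degree v := by
  rw [transmission]
  push_cast
  rw [Finset.sum_congr rfl (fun u _ => aux_dist_cast G hconn hdiam v u)]
  rw [Finset.sum_sub_distrib, Finset.sum_sub_distrib, ← Finset.mul_sum, Finset.sum_boole,
    Finset.sum_boole]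
  have h1 : (Finset.univ.filter (fun u => v = u)).card = 1 := by
    rw [Finset.filter_eq]; simp
  have h2 : (Finset.univ.filter (fun u => G.Adj v u)).card = G.degree v := by
    rw [← SimpleGraph.neighborFinset_eq_filter]; rfl
  rw [h1, h2]
  simp [Finset.card_univ]
  ring

lemma aux_distLap_eq (hconn : G.Connected) (hdiam : ∀ u v, G.dist u v ≤ 2) :
    distLap G = (2 * n : ℝ) • (1 : Matrix (Fin n) (Fin n) ℝ)
      - 2 • (Matrix.of fun _ _ => (1 : ℝ)) - G.lapMatrix ℝ := by
  ext u v
  simp only [distLap, distMatrix, Matrix.sub_apply, Matrix.smul_apply, Matrix.of_apply,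
    SimpleGraph.lapMatrix, SimpleGraph.degMatrix, smul_eq_mul, SimpleGraph.adjMatrix_apply]
  rw [aux_dist_cast G hconn hdiam u v]
  by_cases h : u = v
  · subst h
    rw [Matrix.diagonal_apply_eq, Matrix.diagonal_apply_eq, Matrix.one_apply_eq,
      aux_transmission_cast G hconn hdiam]
    simp [G.irrefl]
  · rw [Matrix.diagonal_apply_ne _ h, Matrix.diagonal_apply_ne _ h, Matrix.one_apply_ne h]
    simp [h]
    ring

lemma aux_wiener (hconn : G.Connected) (hdiam : ∀ u v, G.dist u v ≤ 2) :
    wiener G = (n : ℝ) ^ 2 - n - G.edgeFinset.card := by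
  rw [wiener, Finset.sum_congr rfl (fun v _ => aux_transmission_cast G hconn hdiam v)]
  rw [Finset.sum_sub_distrib, Finset.sum_sub_distrib, Finset.sum_const, Finset.sum_const,
    Finset.card_univ, Fintype.card_fin]
  have hdeg : ∑ v, (G.degree v : ℝ) = 2 * G.edgeFinset.card := by
    rw [← Nat.cast_sum, SimpleGraph.sum_degrees_eq_twice_card_edges]
    push_cast; ring
  rw [hdeg]
  simp only [nsmul_eq_mul]
  ring

end Graph

section Eig

variable {n : ℕ} (G : SimpleGraph (Fin n)) [DecidableRel G.Adj]
  (hL : (G.lapMatrix ℝ).IsHermitian)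

lemma aux_col_sum (u : Fin n) : ∑ v, G.lapMatrix ℝ v u = 0 := by
  have hsym := SimpleGraph.isSymm_lapMatrix G (R := ℝ)
  have hrow := congrFun (SimpleGraph.lapMatrix_mulVec_const_eq_zero G (R := ℝ)) u
  simp only [Matrix.mulVec, dotProduct, mul_one, Pi.zero_apply] at hrow
  rw [← hrow]
  exact Finset.sum_congr rfl fun v _ => hsym.apply u v

lemma aux_sum_eigvec (j : Fin n) (h : hL.eigenvalues j ≠ 0) :
    ∑ v, hL.eigenvectorBasis j v = 0 := by
  have hm := hL.mulVec_eigenvectorBasis j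
  have hsum := congrArg (fun x : Fin n → ℝ => ∑ v, x v) hm
  simp only [Matrix.mulVec, dotProduct, Pi.smul_apply, smul_eq_mul] at hsum
  rw [Finset.sum_comm, ← Finset.mul_sum] at hsum
  have hz : ∑ u, ∑ v, G.lapMatrix ℝ v u * hL.eigenvectorBasis j u = 0 := by
    refine Finset.sum_eq_zero fun u _ => ?_
    rw [← Finset.sum_mul, aux_col_sum G u, zero_mul]
  rw [hz] at hsum
  exact (mul_eq_zero.mp hsum.symm).resolve_left h

lemma aux_eigvec_const (hconn : G.Connected) (j : Fin n) (h : hL.eigenvalues j = 0)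
    (v w : Fin n) : hL.eigenvectorBasis j v = hL.eigenvectorBasis j w := by
  have hm := hL.mulVec_eigenvectorBasis j
  rw [h, zero_smul] at hm
  have : Matrix.toLin' (G.lapMatrix ℝ) ⇑(hL.eigenvectorBasis j) = 0 := by
    rw [Matrix.toLin'_apply]; exact hm
  exact (SimpleGraph.lapMatrix_mulVec_eq_zero_iff_forall_reachable (G := G)).mp hm v w
    (hconn.preconnected v w)

lemma aux_inner (i j : Fin n) :
    ∑ v, hL.eigenvectorBasis i v * hL.eigenvectorBasis j v = if i = j then 1 else 0 := by
  have := (orthonormal_iff_ite.mp hL.eigenvectorBasis.orthonormal) i j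
  rw [PiLp.inner_apply] at this
  simpa [mul_comm] using this

lemma aux_zero_unique (hconn : G.Connected) (i j : Fin n)
    (hi : hL.eigenvalues i = 0) (hj : hL.eigenvalues j = 0) : i = j := by
  by_contra hne
  obtain ⟨v⟩ : Nonempty (Fin n) := hconn.nonempty
  have hci : ∀ w, hL.eigenvectorBasis i w = hL.eigenvectorBasis i v :=
    fun w => aux_eigvec_const G hL hconn i hi w v
  have hcj : ∀ w, hL.eigenvectorBasis j w = hL.eigenvectorBasis j v :=
    fun w => aux_eigvec_const G hL hconn j hj w v
  have h0 := aux_inner G hL i j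
  have h1 := aux_inner G hL i i
  have h2 := aux_inner G hL j j
  rw [if_neg hne] at h0
  rw [if_pos rfl] at h1 h2
  simp only [fun w => hci w, fun w => hcj w, Finset.sum_const, Finset.card_univ,
    Fintype.card_fin, nsmul_eq_mul] at h0 h1 h2
  have hvi : hL.eigenvectorBasis i v ≠ 0 := by
    intro h; rw [h] at h1; simp at h1
  have hvj : hL.eigenvectorBasis j v ≠ 0 := by
    intro h; rw [h] at h2; simp at h2
  have hn0 : (n : ℝ) ≠ 0 := by
    intro h; rw [h] at h1; simp at h1
  exact absurd h0 (by positivity)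

lemma aux_sumsq (hconn : G.Connected) (j : Fin n) (h : hL.eigenvalues j = 0) :
    (∑ v, hL.eigenvectorBasis j v) ^ 2 = n := by
  obtain ⟨v⟩ : Nonempty (Fin n) := hconn.nonempty
  have hc : ∀ w, hL.eigenvectorBasis j w = hL.eigenvectorBasis j v :=
    fun w => aux_eigvec_const G hL hconn j h w v
  have h2 := aux_inner G hL j j
  rw [if_pos rfl] at h2
  simp only [fun w => hc w, Finset.sum_const, Finset.card_univ, Fintype.card_fin,
    nsmul_eq_mul] at h2 ⊢
  have : ((n : ℝ) * hL.eigenvectorBasis j v) ^ 2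
      = n * (n * (hL.eigenvectorBasis j v * hL.eigenvectorBasis j v)) := by ring
  rw [this, h2, mul_one]

lemma aux_starU_J_U (hconn : G.Connected) :
    star (hL.eigenvectorUnitary : Matrix (Fin n) (Fin n) ℝ) *
      ((Matrix.of fun _ _ => (1 : ℝ)) * (hL.eigenvectorUnitary : Matrix (Fin n) (Fin n) ℝ))
      = Matrix.diagonal (fun i => if hL.eigenvalues i = 0 then (n : ℝ) else 0) := by
  ext i j
  rw [Matrix.mul_apply]
  simp only [Matrix.mul_apply, Matrix.star_apply, star_trivial, Matrix.of_apply, one_mul,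
    Matrix.IsHermitian.eigenvectorUnitary_apply]
  rw [show ∀ f g : Fin n → ℝ, ∑ u, f u * ∑ v, g v = (∑ u, f u) * (∑ v, g v) from
    fun f g => by rw [← Finset.sum_mul]]
  by_cases hij : i = j
  · subst hij
    rw [Matrix.diagonal_apply_eq]
    by_cases hi : hL.eigenvalues i = 0
    · rw [if_pos hi, ← sq, aux_sumsq G hL hconn i hi]
    · rw [if_neg hi, aux_sum_eigvec G hL i hi, zero_mul]
  · rw [Matrix.diagonal_apply_ne _ hij]
    by_cases hi : hL.eigenvalues i = 0
    · have hj : hL.eigenvalues j ≠ 0 := fun hj => hij (aux_zero_unique G hL hconn i j hi hj)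
      rw [aux_sum_eigvec G hL j hj, mul_zero]
    · rw [aux_sum_eigvec G hL i hi, zero_mul]

lemma aux_diag (hconn : G.Connected) (hdiam : ∀ u v, G.dist u v ≤ 2) :
    star (hL.eigenvectorUnitary : Matrix (Fin n) (Fin n) ℝ) *
      (distLap G * (hL.eigenvectorUnitary : Matrix (Fin n) (Fin n) ℝ))
      = Matrix.diagonal (fun i => 2 * n - 2 * (if hL.eigenvalues i = 0 then (n : ℝ) else 0)
          - hL.eigenvalues i) := by
  set U : Matrix (Fin n) (Fin n) ℝ := (hL.eigenvectorUnitary : Matrix (Fin n) (Fin n) ℝ) with hUdef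
  have hU' : star U * U = 1 := Matrix.mem_unitaryGroup_iff'.mp hL.eigenvectorUnitary.2
  have hLdiag : star U * (G.lapMatrix ℝ * U) = Matrix.diagonal hL.eigenvalues := by
    have := hL.conjStarAlgAut_star_eigenvectorUnitary
    rw [Unitary.conjStarAlgAut_star_apply, RCLike.ofReal_real_eq_id, Function.id_comp, mul_assoc] at this
    exact this
  rw [aux_distLap_eq G hconn hdiam, Matrix.sub_mul, Matrix.sub_mul, Matrix.mul_sub,
    Matrix.mul_sub, Matrix.smul_mul, Matrix.smul_mul, Matrix.mul_smul, Matrix.mul_smul,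
    Matrix.one_mul, hU', hLdiag, aux_starU_J_U G hL hconn]
  rw [Matrix.smul_one_eq_diagonal, ← Matrix.diagonal_smul, Matrix.diagonal_sub,
    Matrix.diagonal_sub]
  ext i
  simp [smul_eq_mul]

end Eig

lemma aux_count {n : ℕ} (f : Fin n → ℝ) (p : ℝ → Prop) [DecidablePred p] :
    (Finset.univ.filter (fun i => p (f i))).card
      = Multiset.countP p (Multiset.map f Finset.univ.val) := by
  rw [Multiset.countP_map]
  rfl

theorem stmt5 {n : ℕ} (hn : 3 ≤ n) (G : SimpleGraph (Fin n)) [DecidableRel G.Adj]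
    (hconn : G.Connected) (hdiam : diamTwo G)
    (m : ℕ) (hm : m = G.edgeFinset.card)
    (ρ μ : Fin n → ℝ)
    (hρ : IsSpectrum (distLap G) ρ) (hμ : IsSpectrum (G.lapMatrix ℝ) μ)
    (σ t : ℕ)
    (hσ : σ = (Finset.univ.filter (fun i => 2 * wiener G / n < ρ i)).card)
    (ht : t = (Finset.univ.filter (fun i => 2 * (m : ℝ) / n < μ i)).card) :
    n - (t + 1) ≤ σ := by
  obtain ⟨hdiam2, -⟩ := hdiam
  obtain ⟨-, hDL, e, hρe⟩ := hρ
  obtain ⟨-, hLh, e', hμe⟩ := hμ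
  have hn0 : (0 : ℝ) < n := by positivity
  set eig : Fin n → ℝ := hLh.eigenvalues with heig
  set g : Fin n → ℝ :=
    fun i => 2 * n - 2 * (if eig i = 0 then (n : ℝ) else 0) - eig i with hg
  -- multiset of eigenvalues of distLap equals multiset of g
  have hUmem : (hLh.eigenvectorUnitary : Matrix (Fin n) (Fin n) ℝ) *
      star (hLh.eigenvectorUnitary : Matrix (Fin n) (Fin n) ℝ) = 1 :=
    Matrix.mem_unitaryGroup_iff.mp hLh.eigenvectorUnitary.2
  have hmult : Multiset.map hDL.eigenvalues Finset.univ.val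
      = Multiset.map g Finset.univ.val :=
    aux_eig_multiset _ hDL g _ hUmem (aux_diag G hLh hconn hdiam2)
  -- handle the permutations
  have hperm : ∀ (e : Fin n ≃ Fin n) (f : Fin n → ℝ),
      Multiset.map (fun i => f (e i)) Finset.univ.val = Multiset.map f Finset.univ.val := by
    intro e f
    have h1 : Multiset.map (⇑e) Finset.univ.val = Finset.univ.val :=
      congrArg Finset.val (Finset.map_univ_equiv e)
    conv_rhs => rw [← h1]
    rw [Multiset.map_map]
    rfl
  -- σ counts values of g above the threshold
  have hσ' : σ = (Finset.univ.filter (fun i => 2 * wiener G / n < g i)).card := by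
    rw [hσ, aux_count ρ (fun x => 2 * wiener G / n < x), aux_count g]
    congr 1
    have : ρ = fun i => hDL.eigenvalues (e i) := funext hρe
    rw [this, hperm e hDL.eigenvalues, hmult]
  have ht' : t = (Finset.univ.filter (fun i => 2 * (m : ℝ) / n < eig i)).card := by
    rw [ht, aux_count μ (fun x => 2 * (m : ℝ) / n < x), aux_count eig]
    congr 1
    have : μ = fun i => hLh.eigenvalues (e' i) := funext hμe
    rw [this, hperm e' hLh.eigenvalues]
  -- the key subset inclusion
  have hwiener : wiener G = (n : ℝ) ^ 2 - n - m := by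
    rw [aux_wiener G hconn hdiam2, hm]
  set T := Finset.univ.filter (fun i => ¬ (2 * (m : ℝ) / n < eig i)) with hT
  have hTcard : t + T.card = n := by
    rw [ht', hT, Finset.card_filter_add_card_filter_not, Finset.card_univ,
      Fintype.card_fin]
  have hsub : T.filter (fun i => ¬ (eig i = 0))
      ⊆ Finset.univ.filter (fun i => 2 * wiener G / n < g i) := by
    intro i hi
    simp only [Finset.mem_filter, hT, Finset.mem_univ, true_and, not_lt] at hi
    obtain ⟨hle, hne⟩ := hi
    simp only [Finset.mem_filter, Finset.mem_univ, true_and]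
    rw [hg]
    simp only [if_neg hne]
    rw [hwiener, div_lt_iff₀ hn0]
    have hle' : eig i * n ≤ 2 * m := by
      have := (le_div_iff₀ hn0).mp hle
      linarith
    have hn3 : (3 : ℝ) ≤ n := by exact_mod_cast hn
    nlinarith
  have hZ : (T.filter (fun i => eig i = 0)).card ≤ 1 := by
    apply Finset.card_le_one.mpr
    intro a ha b hb
    simp only [Finset.mem_filter] at ha hb
    exact aux_zero_unique G hLh hconn a b ha.2 hb.2
  have hsplit : (T.filter (fun i => eig i = 0)).card
      + (T.filter (fun i => ¬ (eig i = 0))).card = T.card :=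
    Finset.card_filter_add_card_filter_not (fun i => eig i = 0)
  have hσge : (T.filter (fun i => ¬ (eig i = 0))).card ≤ σ := by
    rw [hσ']
    exact Finset.card_le_card hsub
  omega
end

section
/- For a connected graph G of order n ≥ 3 with minimum transmission Tr_min and Wiener index W(G), the distance Laplacian energy satisfies DLE(G) ≥ 8W(G)/n − 2n·Tr_min/(n−1). -/
open Finset Matrix BigOperators

variable {V : Type*} [Fintype V] [DecidableEq V]

section Aux

lemma weighted_lb {n : ℕ} (hn : 2 ≤ n) (ρ c : Fin n → ℝ) (hanti : Antitone ρ)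
    (hc0 : ∀ i, 0 ≤ c i) (hc1 : ∀ i, c i ≤ 1) (hsum : ∑ i, c i = 2) :
    ρ ⟨n-2, by omega⟩ + ρ ⟨n-1, by omega⟩ ≤ ∑ i, ρ i * c i := by
  set i₁ : Fin n := ⟨n-2, by omega⟩
  set i₀ : Fin n := ⟨n-1, by omega⟩
  have hne : i₀ ≠ i₁ := by simp [i₀, i₁, Fin.ext_iff]; omega
  have hpair : ({i₀, i₁} : Finset (Fin n)) ⊆ univ := subset_univ _
  have hsplit : ∀ f : Fin n → ℝ, ∑ i, f i = (f i₀ + f i₁) + ∑ i ∈ univ \ {i₀, i₁}, f i := by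
    intro f
    rw [← Finset.sum_sdiff hpair, Finset.sum_pair hne]; ring
  have hssum : ∑ i ∈ univ \ {i₀, i₁}, c i = 2 - c i₀ - c i₁ := by
    have := hsplit c; rw [hsum] at this; linarith
  have hmono : ∀ i ∈ univ \ {i₀, i₁}, ρ i₁ * c i ≤ ρ i * c i := by
    intro i hi
    simp only [mem_sdiff, mem_univ, mem_insert, mem_singleton, true_and] at hi
    push_neg at hi
    have hile : i ≤ i₁ := by
      rw [Fin.le_def]
      have h0 := Fin.ext_iff.not.mp hi.1
      have h1 := Fin.ext_iff.not.mp hi.2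
      have := i.isLt
      simp only [i₀, i₁] at h0 h1 ⊢
      omega
    exact mul_le_mul_of_nonneg_right (hanti hile) (hc0 i)
  have h1 : ρ i₁ * (2 - c i₀ - c i₁) ≤ ∑ i ∈ univ \ {i₀, i₁}, ρ i * c i := by
    rw [← hssum, Finset.mul_sum]
    exact Finset.sum_le_sum hmono
  have h2 : ∑ i, ρ i * c i = (ρ i₀ * c i₀ + ρ i₁ * c i₁) + ∑ i ∈ univ \ {i₀, i₁}, ρ i * c i :=
    hsplit _
  have h3 : ρ i₀ ≤ ρ i₁ := hanti (by rw [Fin.le_def]; simp [i₀, i₁]; omega)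
  nlinarith [hc1 i₀, hc0 i₀]

lemma quadform_eq {n : ℕ} {M : Matrix (Fin n) (Fin n) ℝ} (hM : M.IsHermitian) (w : Fin n → ℝ) :
    w ⬝ᵥ (M *ᵥ w) = ∑ j, hM.eigenvalues j *
      ((star (hM.eigenvectorUnitary : Matrix (Fin n) (Fin n) ℝ) *ᵥ w) j)^2 := by
  set U : Matrix (Fin n) (Fin n) ℝ := (hM.eigenvectorUnitary : Matrix (Fin n) (Fin n) ℝ) with hU
  have h1 : M = U * diagonal (RCLike.ofReal ∘ hM.eigenvalues) * star U := hM.spectral_theorem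
  conv_lhs => rw [h1]
  rw [← mulVec_mulVec, ← mulVec_mulVec, dotProduct_mulVec w U]
  have h2 : vecMul w U = star U *ᵥ w := by
    ext j
    simp [vecMul, mulVec, dotProduct, conjTranspose, mul_comm]
  rw [h2]
  simp [dotProduct, mulVec_diagonal, mul_comm, sq, mul_assoc, mul_left_comm]

lemma coord_dot {n : ℕ} {M : Matrix (Fin n) (Fin n) ℝ} (hM : M.IsHermitian) (x y : Fin n → ℝ) :
    (star (hM.eigenvectorUnitary : Matrix (Fin n) (Fin n) ℝ) *ᵥ x) ⬝ᵥ
      (star (hM.eigenvectorUnitary : Matrix (Fin n) (Fin n) ℝ) *ᵥ y) = x ⬝ᵥ y := by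
  set U : Matrix (Fin n) (Fin n) ℝ := (hM.eigenvectorUnitary : Matrix (Fin n) (Fin n) ℝ) with hU
  have h2 : vecMul x U = star U *ᵥ x := by
    ext j
    simp [vecMul, mulVec, dotProduct, conjTranspose, mul_comm]
  rw [← h2, ← dotProduct_mulVec, mulVec_mulVec,
    (Matrix.mem_unitaryGroup_iff).mp hM.eigenvectorUnitary.2, one_mulVec]

lemma coord_sq_add_sq_le_one {n : ℕ} {M : Matrix (Fin n) (Fin n) ℝ} (hM : M.IsHermitian)
    (x y : Fin n → ℝ) (hx : x ⬝ᵥ x = 1) (hy : y ⬝ᵥ y = 1) (hxy : x ⬝ᵥ y = 0) (j : Fin n) :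
    ((star (hM.eigenvectorUnitary : Matrix (Fin n) (Fin n) ℝ) *ᵥ x) j)^2 +
    ((star (hM.eigenvectorUnitary : Matrix (Fin n) (Fin n) ℝ) *ᵥ y) j)^2 ≤ 1 := by
  set U : Matrix (Fin n) (Fin n) ℝ := (hM.eigenvectorUnitary : Matrix (Fin n) (Fin n) ℝ) with hU
  have hcol : ∑ i, U i j * U i j = 1 := by
    have h : (star U * U) j j = (1 : Matrix (Fin n) (Fin n) ℝ) j j := by
      rw [Unitary.coe_star_mul_self hM.eigenvectorUnitary]
    simpa [Matrix.mul_apply, conjTranspose, Matrix.one_apply] using h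
  set a : ℝ := (star U *ᵥ x) j with ha
  set b : ℝ := (star U *ᵥ y) j with hb
  have hax : ∑ i, U i j * x i = a := by
    rw [ha]; simp [mulVec, dotProduct, conjTranspose]
  have hby : ∑ i, U i j * y i = b := by
    rw [hb]; simp [mulVec, dotProduct, conjTranspose]
  set p : Fin n → ℝ := fun i => a * x i + b * y i with hp
  have h1 : ∑ i, U i j * p i = a^2 + b^2 := by
    simp only [hp, mul_add, Finset.sum_add_distrib, mul_left_comm, ← Finset.mul_sum, hax, hby]
    ring
  have h2 : ∑ i, p i * p i = a^2 + b^2 := by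
    have : ∀ i, p i * p i = a*a*(x i * x i) + (2*a*b)*(x i * y i) + b*b*(y i * y i) := by
      intro i; simp only [hp]; ring
    simp only [this, Finset.sum_add_distrib, ← Finset.mul_sum]
    rw [show ∑ i, x i * x i = 1 from hx, show ∑ i, x i * y i = 0 from hxy,
      show ∑ i, y i * y i = 1 from hy]
    ring
  have hcs := Finset.sum_mul_sq_le_sq_mul_sq Finset.univ (fun i => U i j) p
  simp only [sq] at hcs h1 h2 ⊢
  rw [h1, hcol, h2, one_mul] at hcs
  nlinarith [sq_nonneg a, sq_nonneg b, sq_nonneg (a*a + b*b)]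

lemma two_smallest {n : ℕ} (hn : 2 ≤ n) {M : Matrix (Fin n) (Fin n) ℝ} (hM : M.IsHermitian)
    (ρ : Fin n → ℝ) (hanti : Antitone ρ) (e : Fin n ≃ Fin n)
    (he : ∀ i, ρ i = hM.eigenvalues (e i))
    (x y : Fin n → ℝ) (hx : x ⬝ᵥ x = 1) (hy : y ⬝ᵥ y = 1) (hxy : x ⬝ᵥ y = 0) :
    ρ ⟨n-2, by omega⟩ + ρ ⟨n-1, by omega⟩ ≤ x ⬝ᵥ (M *ᵥ x) + y ⬝ᵥ (M *ᵥ y) := by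
  set U : Matrix (Fin n) (Fin n) ℝ := (hM.eigenvectorUnitary : Matrix (Fin n) (Fin n) ℝ) with hU
  set a : Fin n → ℝ := star U *ᵥ x with ha
  set b : Fin n → ℝ := star U *ᵥ y with hb
  set c : Fin n → ℝ := fun i => (a (e i))^2 + (b (e i))^2 with hc
  have hc0 : ∀ i, 0 ≤ c i := fun i => by positivity
  have hc1 : ∀ i, c i ≤ 1 := fun i => coord_sq_add_sq_le_one hM x y hx hy hxy (e i)
  have hsum : ∑ i, c i = 2 := by
    rw [hc]
    rw [Fintype.sum_equiv e _ (fun j => (a j)^2 + (b j)^2) (fun i => rfl)]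
    have h1 : a ⬝ᵥ a = 1 := by rw [ha, coord_dot hM x x, hx]
    have h2 : b ⬝ᵥ b = 1 := by rw [hb, coord_dot hM y y, hy]
    simp only [dotProduct, ← sq] at h1 h2
    rw [Finset.sum_add_distrib, h1, h2]; norm_num
  have hqsum : ∑ i, ρ i * c i = x ⬝ᵥ (M *ᵥ x) + y ⬝ᵥ (M *ᵥ y) := by
    rw [quadform_eq hM x, quadform_eq hM y, ← ha, ← hb]
    rw [Fintype.sum_equiv e (fun i => ρ i * c i)
      (fun j => hM.eigenvalues j * (a j)^2 + hM.eigenvalues j * (b j)^2)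
      (fun i => by simp only [hc]; rw [he i]; ring)]
    rw [Finset.sum_add_distrib]
  rw [← hqsum]
  exact weighted_lb hn ρ c hanti hc0 hc1 hsum

lemma sum_eigs_eq_trace {n : ℕ} {M : Matrix (Fin n) (Fin n) ℝ} (hM : M.IsHermitian) :
    ∑ j, hM.eigenvalues j = M.trace := by
  set U : Matrix (Fin n) (Fin n) ℝ := (hM.eigenvectorUnitary : Matrix (Fin n) (Fin n) ℝ) with hU
  have h1 : M = U * diagonal (RCLike.ofReal ∘ hM.eigenvalues) * star U := hM.spectral_theorem
  conv_rhs => rw [h1]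
  rw [Matrix.trace_mul_cycle,
    Unitary.coe_star_mul_self hM.eigenvectorUnitary, Matrix.one_mul, Matrix.trace_diagonal]
  simp [RCLike.ofReal]

lemma distLap_symm (G : SimpleGraph V) (u w : V) : distLap G u w = distLap G w u := by
  simp only [distLap, distMatrix, Matrix.sub_apply]
  rw [G.dist_comm]
  rcases eq_or_ne u w with h | h
  · rw [h]
  · rw [Matrix.diagonal_apply_ne _ h, Matrix.diagonal_apply_ne _ (Ne.symm h)]

lemma distLap_row_sum (G : SimpleGraph V) (u : V) : ∑ w, distLap G u w = 0 := by
  simp only [distLap, distMatrix, Matrix.sub_apply, Finset.sum_sub_distrib]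
  rw [Finset.sum_eq_single u (fun b _ hb => Matrix.diagonal_apply_ne _ (Ne.symm hb))
    (fun h => absurd (Finset.mem_univ u) h)]
  simp [transmission]

lemma distLap_col_sum (G : SimpleGraph V) (v : V) : ∑ u, distLap G u v = 0 := by
  rw [Finset.sum_congr rfl (fun u _ => distLap_symm G u v)]
  exact distLap_row_sum G v

lemma distLap_diag (G : SimpleGraph V) (v : V) : distLap G v v = (transmission G v : ℝ) := by
  simp [distLap, distMatrix, Matrix.diagonal_apply_eq]

lemma distLap_trace (G : SimpleGraph V) :
    (distLap G).trace = ∑ v, (transmission G v : ℝ) := by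
  simp only [Matrix.trace, Matrix.diag]
  exact Finset.sum_congr rfl (fun v _ => distLap_diag G v)

end Aux

theorem stmt6 {n : ℕ} (hn : 3 ≤ n) (G : SimpleGraph (Fin n)) (hconn : G.Connected)
    (ρ : Fin n → ℝ) (hρ : IsSpectrum (distLap G) ρ)
    (Trmin : ℕ)
    (hTr : Trmin = Finset.univ.inf' ⟨⟨0, by omega⟩, Finset.mem_univ _⟩ (transmission G)) :
    8 * wiener G / n - 2 * (n : ℝ) * (Trmin : ℝ) / ((n : ℝ) - 1) ≤ DLEnergy G ρ := by
  obtain ⟨hanti, hM, e, he⟩ := hρ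
  -- the minimizing vertex
  obtain ⟨v, -, hv⟩ := Finset.exists_mem_eq_inf' (⟨⟨0, by omega⟩, Finset.mem_univ _⟩ :
    Finset.univ.Nonempty) (transmission G)
  have hTrv : (Trmin : ℝ) = (transmission G v : ℝ) := by rw [hTr, hv]
  -- numeric facts
  have hnR : (3:ℝ) ≤ (n:ℝ) := by exact_mod_cast hn
  have hn0 : (0:ℝ) < (n:ℝ) := by linarith
  have hn1 : (0:ℝ) < (n:ℝ) - 1 := by linarith
  set A := distLap G with hA
  -- the test vectors
  set x : Fin n → ℝ := fun _ => (Real.sqrt n)⁻¹ with hxdef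
  set w : Fin n → ℝ := fun u => (if u = v then 1 else 0) - 1/n with hwdef
  set k : ℝ := Real.sqrt ((n:ℝ)/((n:ℝ)-1)) with hkdef
  set y : Fin n → ℝ := fun u => k * w u with hydef
  have hsn : Real.sqrt n * Real.sqrt n = n := Real.mul_self_sqrt (le_of_lt hn0)
  have hsnpos : (0:ℝ) < Real.sqrt n := Real.sqrt_pos.mpr hn0
  have hkk : k * k = (n:ℝ)/((n:ℝ)-1) := Real.mul_self_sqrt (by positivity)
  have hδsum : ∑ u : Fin n, (if u = v then (1:ℝ) else 0) = 1 := by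
    rw [Finset.sum_ite_eq' Finset.univ v (fun _ => (1:ℝ))]
    simp
  have hwsum : ∑ u, w u = 0 := by
    simp only [hwdef, Finset.sum_sub_distrib, hδsum, Finset.sum_const, card_univ,
      Fintype.card_fin, nsmul_eq_mul]
    field_simp
    norm_num
  have hww : ∑ u, w u * w u = ((n:ℝ)-1)/n := by
    have expand : ∀ u : Fin n, w u * w u =
        (if u = v then (1:ℝ) else 0) - (2/n) * (if u = v then (1:ℝ) else 0) + 1/n^2 := by
      intro u
      simp only [hwdef]
      rcases eq_or_ne u v with h | h <;> simp [h] <;> ring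
    rw [Finset.sum_congr rfl (fun u _ => expand u)]
    simp only [Finset.sum_add_distrib, Finset.sum_sub_distrib, hδsum, ← Finset.mul_sum,
      Finset.sum_const, card_univ, Fintype.card_fin, nsmul_eq_mul]
    field_simp
    ring
  have hx : x ⬝ᵥ x = 1 := by
    simp only [dotProduct, hxdef, Finset.sum_const, card_univ, Fintype.card_fin, nsmul_eq_mul]
    rw [← mul_inv, hsn]
    field_simp
  have hy : y ⬝ᵥ y = 1 := by
    simp only [dotProduct, hydef]
    have : ∀ u : Fin n, (k * w u) * (k * w u) = (k*k) * (w u * w u) := fun u => by ring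
    rw [Finset.sum_congr rfl (fun u _ => this u), ← Finset.mul_sum, hww, hkk]
    field_simp
  have hxy : x ⬝ᵥ y = 0 := by
    simp only [dotProduct, hxdef, hydef, ← Finset.mul_sum, mul_left_comm, ← Finset.mul_sum]
    rw [hwsum]
    simp
  -- quadratic forms
  have hAones : ∀ u, ∑ j, A u j = 0 := distLap_row_sum G
  have hqx : x ⬝ᵥ (A *ᵥ x) = 0 := by
    have : A *ᵥ x = 0 := by
      ext u
      simp only [mulVec, dotProduct, hxdef, Pi.zero_apply, ← Finset.sum_mul, hAones u, zero_mul]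
    rw [this, dotProduct_zero]
  have hqy : y ⬝ᵥ (A *ᵥ y) = (n:ℝ)/((n:ℝ)-1) * (transmission G v : ℝ) := by
    have hcol : A *ᵥ y = fun u => k * A u v := by
      ext u
      simp only [mulVec, dotProduct, hydef, hwdef]
      have : ∀ j : Fin n, A u j * (k * ((if j = v then (1:ℝ) else 0) - 1/n)) =
          k * (A u j * (if j = v then (1:ℝ) else 0)) - (k/n) * A u j := fun j => by ring
      rw [Finset.sum_congr rfl (fun j _ => this j), Finset.sum_sub_distrib,
        ← Finset.mul_sum, ← Finset.mul_sum]
      rw [show ∑ j, A u j * (if j = v then (1:ℝ) else 0) = A u v by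
        rw [Finset.sum_congr rfl (fun j _ => mul_ite_zero ..), Finset.sum_ite_eq' Finset.univ v]
        simp]
      rw [hAones u, mul_zero, sub_zero]
    rw [hcol]
    simp only [dotProduct, hydef, hwdef]
    have : ∀ u : Fin n, (k * ((if u = v then (1:ℝ) else 0) - 1/n)) * (k * A u v) =
        (k*k) * (A u v * (if u = v then (1:ℝ) else 0)) - (k*k/n) * A u v := fun u => by ring
    rw [Finset.sum_congr rfl (fun u _ => this u), Finset.sum_sub_distrib, ← Finset.mul_sum,
      ← Finset.mul_sum]
    rw [show ∑ u, A u v * (if u = v then (1:ℝ) else 0) = A v v by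
      rw [Finset.sum_congr rfl (fun u _ => mul_ite_zero ..), Finset.sum_ite_eq' Finset.univ v]
      simp]
    have hdiag : A v v = (transmission G v : ℝ) := distLap_diag G v
    rw [distLap_col_sum G v, mul_zero, sub_zero, hdiag, hkk]
  -- two smallest eigenvalues bound
  have hkey := two_smallest (by omega) hM ρ hanti e he x y hx hy hxy
  rw [hqx, hqy, zero_add] at hkey
  -- trace/sum of eigenvalues
  have htrace : ∑ i, ρ i = 2 * wiener G := by
    rw [Fintype.sum_equiv e ρ hM.eigenvalues he, sum_eigs_eq_trace hM, distLap_trace G, wiener]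
    ring
  -- energy lower bound
  set m : ℝ := 2 * wiener G / n with hm
  have hsum0 : ∑ i, (ρ i - m) = 0 := by
    rw [Finset.sum_sub_distrib, htrace, Finset.sum_const, card_univ, Fintype.card_fin,
      nsmul_eq_mul, hm]
    field_simp
    norm_num
  set i₁ : Fin n := ⟨n-2, by omega⟩
  set i₀ : Fin n := ⟨n-1, by omega⟩
  have hne : i₀ ≠ i₁ := by simp [i₀, i₁, Fin.ext_iff]; omega
  have hDLE : DLEnergy G ρ = ∑ i, (|ρ i - m| - (ρ i - m)) := by
    rw [Finset.sum_sub_distrib, hsum0, sub_zero, DLEnergy]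
  have hlb : (|ρ i₀ - m| - (ρ i₀ - m)) + (|ρ i₁ - m| - (ρ i₁ - m)) ≤ DLEnergy G ρ := by
    have hsub : ∑ i ∈ ({i₀, i₁} : Finset (Fin n)), (|ρ i - m| - (ρ i - m)) ≤
        ∑ i, (|ρ i - m| - (ρ i - m)) := by
      apply Finset.sum_le_sum_of_subset_of_nonneg (subset_univ _)
      intro i _ _
      have := le_abs_self (ρ i - m)
      linarith
    rw [Finset.sum_pair hne] at hsub
    rw [hDLE]
    exact hsub
  have habs0 : -(2*(ρ i₀ - m)) ≤ |ρ i₀ - m| - (ρ i₀ - m) := by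
    have := neg_abs_le (ρ i₀ - m); linarith
  have habs1 : -(2*(ρ i₁ - m)) ≤ |ρ i₁ - m| - (ρ i₁ - m) := by
    have := neg_abs_le (ρ i₁ - m); linarith
  -- final arithmetic
  have hfinal : 4 * m - 2 * (ρ i₁ + ρ i₀) ≤ DLEnergy G ρ := by linarith
  have hrhs : 8 * wiener G / n - 2 * (n:ℝ) * (Trmin:ℝ) / ((n:ℝ) - 1) ≤
      4 * m - 2 * (ρ i₁ + ρ i₀) := by
    have h1 : 4 * m = 8 * wiener G / n := by rw [hm]; ring
    have h2 : 2 * ((n:ℝ)/((n:ℝ)-1) * (transmission G v : ℝ)) =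
        2 * (n:ℝ) * (Trmin:ℝ) / ((n:ℝ) - 1) := by
      rw [hTrv]; field_simp
    rw [h1]
    have : 2 * (ρ i₁ + ρ i₀) ≤ 2 * (n:ℝ) * (Trmin:ℝ) / ((n:ℝ) - 1) := by
      rw [← h2]; linarith
    linarith
  linarith
end

section
/- If G is a connected graph on n vertices with at least n edges and G′ = G − e is a connected spanning subgraph obtained by deleting an edge, then ρ^L_i(G′) ≥ ρ^L_i(G) for all 1 ≤ i ≤ n, where ρ^L_1 ≥ ... ≥ ρ^L_n are the distance Laplacian eigenvalues. -/
open Finset Matrix BigOperators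

variable {V : Type*} [Fintype V] [DecidableEq V]

section WeylAux


variable {n : ℕ}

lemma dot_sq_eq (x : Fin n → ℝ) : x ⬝ᵥ x = ∑ j, x j ^ 2 := by
  simp [dotProduct, sq]

lemma dot_pos {x : Fin n → ℝ} (hx : x ≠ 0) : 0 < x ⬝ᵥ x := by
  rw [dot_sq_eq]
  obtain ⟨j, hj⟩ := Function.ne_iff.mp hx
  exact Finset.sum_pos' (fun _ _ => sq_nonneg _)
    ⟨j, Finset.mem_univ j, lt_of_le_of_ne (sq_nonneg _) (Ne.symm (pow_ne_zero 2 hj))⟩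

lemma lap_quad_nonneg (E : Matrix (Fin n) (Fin n) ℝ)
    (hsymm : ∀ u v, E u v = E v u) (hpos : ∀ u v, 0 ≤ E u v) (x : Fin n → ℝ) :
    0 ≤ x ⬝ᵥ ((Matrix.diagonal (fun v => ∑ u, E v u) - E) *ᵥ x) := by
  have hT : x ⬝ᵥ ((Matrix.diagonal (fun v => ∑ u, E v u) - E) *ᵥ x)
      = ∑ v, ∑ u, E v u * (x v ^ 2 - x v * x u) := by
    simp only [dotProduct, mulVec, Matrix.sub_apply, Matrix.diagonal_apply, dotProduct]
    apply Finset.sum_congr rfl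
    intro v _
    have h1 : ∑ u, ((if v = u then (∑ w, E v w) else 0) - E v u) * x u
        = (∑ w, E v w) * x v - ∑ u, E v u * x u := by
      simp [sub_mul, Finset.sum_sub_distrib]
    rw [h1]
    simp only [mul_sub, Finset.mul_sum, Finset.sum_mul]
    rw [← Finset.sum_sub_distrib]
    apply Finset.sum_congr rfl
    intro u _
    ring
  have h2 : (2:ℝ) * (∑ v, ∑ u, E v u * (x v ^ 2 - x v * x u))
      = ∑ v, ∑ u, E v u * (x v - x u) ^ 2 := by
    have hswap : ∑ v, ∑ u, E v u * (x v ^ 2 - x v * x u)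
        = ∑ v, ∑ u, E v u * (x u ^ 2 - x u * x v) := by
      rw [Finset.sum_comm]
      exact Finset.sum_congr rfl fun v _ => Finset.sum_congr rfl fun u _ => by rw [hsymm]
    rw [two_mul]
    nth_rewrite 2 [hswap]
    rw [← Finset.sum_add_distrib]
    apply Finset.sum_congr rfl
    intro v _
    rw [← Finset.sum_add_distrib]
    apply Finset.sum_congr rfl
    intro u _
    ring
  have h3 : 0 ≤ ∑ v, ∑ u, E v u * (x v - x u) ^ 2 :=
    Finset.sum_nonneg fun v _ => Finset.sum_nonneg fun u _ =>
      mul_nonneg (hpos v u) (sq_nonneg _)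
  rw [hT]
  linarith

end WeylAux

section Spec


variable {n : ℕ} {A : Matrix (Fin n) (Fin n) ℝ} (hA : A.IsHermitian)

/-- coordinates of `x` in the eigenbasis -/
noncomputable def eigCoord (x : Fin n → ℝ) : Fin n → ℝ :=
  star (hA.eigenvectorUnitary : Matrix (Fin n) (Fin n) ℝ) *ᵥ x

lemma dot_mulVec_unitary (x z : Fin n → ℝ) :
    x ⬝ᵥ ((hA.eigenvectorUnitary : Matrix (Fin n) (Fin n) ℝ) *ᵥ z) = eigCoord hA x ⬝ᵥ z := by
  rw [dotProduct_mulVec]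
  congr 1
  ext j
  simp [eigCoord, vecMul, mulVec, dotProduct, conjTranspose_apply, mul_comm]

lemma quad_eq_sum (x : Fin n → ℝ) :
    x ⬝ᵥ (A *ᵥ x) = ∑ j, hA.eigenvalues j * (eigCoord hA x) j ^ 2 := by
  conv_lhs => rw [hA.spectral_theorem, Unitary.conjStarAlgAut_apply]
  rw [← mulVec_mulVec, ← mulVec_mulVec, dot_mulVec_unitary]
  have : (starRingEnd ℝ) = RingHom.id ℝ := by ext; simp
  simp [dotProduct, mulVec_diagonal, eigCoord]
  apply Finset.sum_congr rfl
  intro j _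
  ring

lemma dot_self_eq_sum (x : Fin n → ℝ) :
    x ⬝ᵥ x = ∑ j, (eigCoord hA x) j ^ 2 := by
  have h1 : x = (hA.eigenvectorUnitary : Matrix (Fin n) (Fin n) ℝ) *ᵥ eigCoord hA x := by
    rw [eigCoord, mulVec_mulVec,
      (Matrix.mem_unitaryGroup_iff).mp hA.eigenvectorUnitary.2, one_mulVec]
  calc x ⬝ᵥ x = x ⬝ᵥ ((hA.eigenvectorUnitary : Matrix (Fin n) (Fin n) ℝ) *ᵥ eigCoord hA x) := by
        nth_rewrite 1 [h1]
        exact dotProduct_comm _ _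
    _ = eigCoord hA x ⬝ᵥ eigCoord hA x := dot_mulVec_unitary hA x _
    _ = ∑ j, (eigCoord hA x) j ^ 2 := by simp [dotProduct, sq]

/-- the span of the eigenvectors indexed by `t` -/
noncomputable def eigSpan (t : Finset (Fin n)) : Submodule ℝ (Fin n → ℝ) :=
  (Submodule.span ℝ ((fun j => Pi.single j (1:ℝ)) '' ↑t)).map
    (Matrix.mulVecLin (hA.eigenvectorUnitary : Matrix (Fin n) (Fin n) ℝ))

lemma unitary_mulVec_injective :
    Function.Injective ((hA.eigenvectorUnitary : Matrix (Fin n) (Fin n) ℝ).mulVecLin) := by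
  intro a b hab
  have := congrArg (fun z => star (hA.eigenvectorUnitary : Matrix (Fin n) (Fin n) ℝ) *ᵥ z) hab
  simpa [mulVec_mulVec, Unitary.coe_star_mul_self, one_mulVec] using this

lemma finrank_eigSpan (t : Finset (Fin n)) :
    Module.finrank ℝ (eigSpan hA t) = t.card := by
  rw [eigSpan, ← LinearEquiv.finrank_eq
    (Submodule.equivMapOfInjective _ (unitary_mulVec_injective hA) _)]
  have hli : LinearIndependent ℝ (fun j : t => (Pi.single (j : Fin n) (1:ℝ) : Fin n → ℝ)) := by
    have h2 : (fun j : t => (Pi.single (j : Fin n) (1:ℝ) : Fin n → ℝ))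
        = (Pi.basisFun ℝ (Fin n)) ∘ (Subtype.val : t → Fin n) := by
      ext j k; simp [Pi.basisFun_apply]
    rw [h2]
    exact (Pi.basisFun ℝ (Fin n)).linearIndependent.comp _ Subtype.val_injective
  have hr : Set.range (fun j : t => (Pi.single (j : Fin n) (1:ℝ) : Fin n → ℝ))
      = (fun j => Pi.single j (1:ℝ)) '' ↑t := by
    ext y; simp [Set.mem_image]
  rw [← hr, finrank_span_eq_card hli, Fintype.card_coe]

lemma eigCoord_eq_zero_of_mem {t : Finset (Fin n)} {x : Fin n → ℝ} (hx : x ∈ eigSpan hA t) :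
    ∀ j ∉ t, eigCoord hA x j = 0 := by
  obtain ⟨y, hy, rfl⟩ := hx
  have hcoord : eigCoord hA ((hA.eigenvectorUnitary : Matrix (Fin n) (Fin n) ℝ).mulVecLin y)
      = y := by
    simp [eigCoord, Matrix.mulVecLin_apply, mulVec_mulVec, Unitary.coe_star_mul_self, one_mulVec]
  rw [hcoord]
  clear hcoord
  induction hy using Submodule.span_induction with
  | mem z hz =>
    obtain ⟨j, hj, rfl⟩ := hz
    intro k hk
    exact Pi.single_eq_of_ne (fun h => hk (by rw [h]; exact hj)) 1
  | zero => intro k _; rfl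
  | add a b _ _ ha hb => intro k hk; simp [ha k hk, hb k hk]
  | smul c a _ ha => intro k hk; simp [ha k hk]

lemma quad_ge_on_eigSpan {t : Finset (Fin n)} {c : ℝ} (hc : ∀ j ∈ t, c ≤ hA.eigenvalues j)
    {x : Fin n → ℝ} (hx : x ∈ eigSpan hA t) :
    c * (x ⬝ᵥ x) ≤ x ⬝ᵥ (A *ᵥ x) := by
  rw [quad_eq_sum hA, dot_self_eq_sum hA, Finset.mul_sum]
  apply Finset.sum_le_sum
  intro j _
  by_cases hj : j ∈ t
  · exact mul_le_mul_of_nonneg_right (hc j hj) (sq_nonneg _)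
  · rw [eigCoord_eq_zero_of_mem hA hx j hj]; simp

lemma quad_le_on_eigSpan {t : Finset (Fin n)} {c : ℝ} (hc : ∀ j ∈ t, hA.eigenvalues j ≤ c)
    {x : Fin n → ℝ} (hx : x ∈ eigSpan hA t) :
    x ⬝ᵥ (A *ᵥ x) ≤ c * (x ⬝ᵥ x) := by
  rw [quad_eq_sum hA, dot_self_eq_sum hA, Finset.mul_sum]
  apply Finset.sum_le_sum
  intro j _
  by_cases hj : j ∈ t
  · exact mul_le_mul_of_nonneg_right (hc j hj) (sq_nonneg _)
  · rw [eigCoord_eq_zero_of_mem hA hx j hj]; simp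

end Spec

section Graph

variable {n : ℕ}

lemma quad_mono (G G' : SimpleGraph (Fin n)) (hle : G' ≤ G) (hconn' : G'.Connected)
    (x : Fin n → ℝ) :
    x ⬝ᵥ (distLap G *ᵥ x) ≤ x ⬝ᵥ (distLap G' *ᵥ x) := by
  set E : Matrix (Fin n) (Fin n) ℝ := fun u v => (G'.dist u v : ℝ) - G.dist u v with hE
  have hdist : ∀ u v, (G.dist u v : ℝ) ≤ (G'.dist u v : ℝ) := fun u v =>
    Nat.cast_le.2 (SimpleGraph.Reachable.dist_anti hle (hconn'.preconnected u v))
  have hdiff : distLap G' - distLap G = Matrix.diagonal (fun v => ∑ u, E v u) - E := by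
    ext v u
    simp only [Matrix.sub_apply]
    by_cases h : v = u
    · subst h
      simp only [Matrix.sub_apply, distLap, distMatrix, Matrix.diagonal_apply_eq,
        transmission, hE]
      push_cast
      rw [Finset.sum_sub_distrib]
      ring
    · simp only [Matrix.sub_apply, distLap, distMatrix, Matrix.diagonal_apply_ne _ h, hE]
      ring
  have h0 := lap_quad_nonneg E
    (fun u v => by simp [hE, SimpleGraph.dist_comm])
    (fun u v => by simpa [hE] using hdist u v) x
  rw [← hdiff, Matrix.sub_mulVec, dotProduct_sub] at h0
  linarith

end Graph


theorem stmt8 {n : ℕ} (G : SimpleGraph (Fin n)) [DecidableRel G.Adj] (hconn : G.Connected)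
    (hm : n ≤ G.edgeFinset.card)
    (e : Sym2 (Fin n)) (he : e ∈ G.edgeSet)
    (G' : SimpleGraph (Fin n)) (hG' : G' = G.deleteEdges {e}) (hconn' : G'.Connected)
    (ρ ρ' : Fin n → ℝ)
    (hρ : IsSpectrum (distLap G) ρ) (hρ' : IsSpectrum (distLap G') ρ') :
    ∀ i, ρ i ≤ ρ' i := by
  obtain ⟨hmono, hA, ee, hρeq⟩ := hρ
  obtain ⟨hmono', hA', ee', hρeq'⟩ := hρ'
  have hle : G' ≤ G := by rw [hG']; exact SimpleGraph.deleteEdges_le _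
  intro i
  set t : Finset (Fin n) := (Finset.Iic i).image ee with ht
  set t' : Finset (Fin n) := (Finset.Ici i).image ee' with ht'
  have hcards : t.card + t'.card = n + 1 := by
    rw [ht, ht', Finset.card_image_of_injective _ ee.injective,
      Finset.card_image_of_injective _ ee'.injective]
    have h1 : (Finset.Iic i ∪ Finset.Ici i) = Finset.univ := by
      ext k; simp [le_total k i]
    have h2 : (Finset.Iic i ∩ Finset.Ici i) = {i} := by
      ext k; simp [Finset.mem_inter, le_antisymm_iff, and_comm]
    have h3 := Finset.card_union_add_card_inter (Finset.Iic i) (Finset.Ici i)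
    rw [h1, h2] at h3
    simp only [Finset.card_univ, Fintype.card_fin, Finset.card_singleton] at h3
    omega
  set S : Submodule ℝ (Fin n → ℝ) := eigSpan hA t with hS
  set S' : Submodule ℝ (Fin n → ℝ) := eigSpan hA' t' with hS'
  have hdim : 0 < Module.finrank ℝ ↥(S ⊓ S') := by
    have h4 := Submodule.finrank_sup_add_finrank_inf_eq S S'
    have h5 : Module.finrank ℝ ↥(S ⊔ S') ≤ n := by
      have := Submodule.finrank_le (S ⊔ S')
      rwa [Module.finrank_fintype_fun_eq_card, Fintype.card_fin] at this
    have hfr : Module.finrank ℝ S = t.card := by rw [hS]; exact finrank_eigSpan hA t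
    have hfr' : Module.finrank ℝ S' = t'.card := by rw [hS']; exact finrank_eigSpan hA' t'
    rw [hfr, hfr'] at h4
    omega
  have : Nontrivial ↥(S ⊓ S') := by
    rw [Submodule.nontrivial_iff_ne_bot]
    intro hbot
    rw [hbot] at hdim
    simp at hdim
  obtain ⟨x, hx0⟩ := exists_ne (0 : ↥(S ⊓ S'))
  have hxne : (x : Fin n → ℝ) ≠ 0 := by
    simpa [Submodule.coe_eq_zero] using hx0
  have hxS : (x : Fin n → ℝ) ∈ S := x.2.1
  have hxS' : (x : Fin n → ℝ) ∈ S' := x.2.2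
  have hlow : ρ i * ((x : Fin n → ℝ) ⬝ᵥ x) ≤ (x : Fin n → ℝ) ⬝ᵥ (distLap G *ᵥ x) := by
    apply quad_ge_on_eigSpan hA _ hxS
    intro j hj
    obtain ⟨k, hk, rfl⟩ := Finset.mem_image.mp hj
    rw [← hρeq k]
    exact hmono (Finset.mem_Iic.mp hk)
  have hhigh : (x : Fin n → ℝ) ⬝ᵥ (distLap G' *ᵥ x) ≤ ρ' i * ((x : Fin n → ℝ) ⬝ᵥ x) := by
    apply quad_le_on_eigSpan hA' _ hxS'
    intro j hj
    obtain ⟨k, hk, rfl⟩ := Finset.mem_image.mp hj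
    rw [← hρeq' k]
    exact hmono' (Finset.mem_Ici.mp hk)
  have hmid := quad_mono G G' hle hconn' (x : Fin n → ℝ)
  have hxx := dot_pos hxne
  have := le_trans hlow (le_trans hmid hhigh)
  exact le_of_mul_le_mul_right (by linarith [this]) hxx
end
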